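/- arXiv:1103.5861 — 10 statements merged into one kernel-verified Lean document; each statement's English description precedes it below -/
import Mathlib

section
/- Let r ≥ 1, let G = (g₁,…,g_r) be a system of polynomials with integer coefficients and F = (f₁,…,f_r) a system of arithmetical functions (f_i : ℕ → ℂ). Let m₁,…,m_r ∈ ℕ, m := lcm[m₁,…,m_r], and let M ∈ ℕ with m ∣ M. Then (1/M) · ∑_{k=1}^{M} f₁(gcd(g₁(k), m₁)) ⋯ f_r(gcd(g_r(k), m_r)) = ∑_{d₁ ∣ m₁, …, d_r ∣ m_r} [(μ∗f₁)(d₁) ⋯ (μ∗f_r)(d_r) / lcm[d₁,…,d_r]] · N_G(d₁,…,d_r). In particular the left-hand side does not depend on the choice of M. -/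
open Finset

/-- Dirichlet convolution of the Möbius function with `f`. -/
noncomputable def muConv (f : ℕ → ℂ) (d : ℕ) : ℂ :=
  ∑ e ∈ d.divisors, (ArithmeticFunction.moebius e : ℂ) * f (d / e)

/-- `NG g d` is the number of residues `x` modulo `lcm[d₁,…,d_r]` satisfying the
simultaneous congruences `gᵢ(x) ≡ 0 (mod dᵢ)` for all `i`. -/
def NG {r : ℕ} (g : Fin r → Polynomial ℤ) (d : Fin r → ℕ) : ℕ :=
  ((Finset.range (Finset.univ.lcm d)).filter
    (fun x : ℕ => ∀ i, (d i : ℤ) ∣ (g i).eval (x : ℤ))).card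

/-- Auxiliary arithmetic function attached to `f`. -/
noncomputable def toAF (f : ℕ → ℂ) : ArithmeticFunction ℂ :=
  ⟨fun n => if n = 0 then 0 else f n, if_pos rfl⟩

lemma muConv_eq (f : ℕ → ℂ) {d : ℕ} (hd : d ≠ 0) :
    muConv f d = (((ArithmeticFunction.moebius : ArithmeticFunction ℤ) :
      ArithmeticFunction ℂ) * toAF f) d := by
  rw [ArithmeticFunction.mul_apply]
  rw [muConv, ← Nat.sum_divisorsAntidiagonal (fun x y => ((ArithmeticFunction.moebius x : ℤ) : ℂ) * f y)]
  refine Finset.sum_congr rfl fun p hp => ?_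
  rw [Nat.mem_divisorsAntidiagonal] at hp
  have h2 : p.2 ≠ 0 := fun h => hp.2 (by rw [← hp.1, h, mul_zero])
  simp [toAF, h2, ArithmeticFunction.intCoe_apply]

lemma sum_muConv (f : ℕ → ℂ) {n : ℕ} (hn : n ≠ 0) :
    ∑ d ∈ n.divisors, muConv f d = f n := by
  have : ∑ d ∈ n.divisors, muConv f d
      = ∑ d ∈ n.divisors,
        (((ArithmeticFunction.moebius : ArithmeticFunction ℤ) : ArithmeticFunction ℂ) * toAF f) d := by
    refine Finset.sum_congr rfl fun d hd => ?_
    exact muConv_eq f (Nat.pos_of_mem_divisors hd).ne'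
  rw [this, ← ArithmeticFunction.coe_zeta_mul_apply, ← mul_assoc]
  have hz : ((ArithmeticFunction.zeta : ArithmeticFunction ℕ) : ArithmeticFunction ℂ) *
      ((ArithmeticFunction.moebius : ArithmeticFunction ℤ) : ArithmeticFunction ℂ) = 1 := by
    rw [mul_comm]; exact ArithmeticFunction.coe_moebius_mul_coe_zeta
  rw [hz, one_mul]
  simp [toAF, hn]

lemma count_range_mul (P : ℕ → Prop) [DecidablePred P] (L : ℕ)
    (hper : ∀ k, P k ↔ P (k % L)) (q : ℕ) :
    ((Finset.range (q * L)).filter P).card = q * ((Finset.range L).filter P).card := by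
  induction q with
  | zero => simp
  | succ q ih =>
    have : (q + 1) * L = q * L + L := by ring
    rw [this, Finset.range_add_eq_union, Finset.filter_union,
      Finset.card_union_of_disjoint (Finset.disjoint_filter_filter
        (Finset.disjoint_range_addLeftEmbedding _ _)), ih,
      Finset.filter_map, Finset.card_map]
    have : Finset.filter ((P ·) ∘ addLeftEmbedding (q * L)) (Finset.range L)
        = Finset.filter P (Finset.range L) := by
      refine Finset.filter_congr fun x hx => ?_
      rw [Finset.mem_range] at hx
      simp only [Function.comp, addLeftEmbedding_apply]
      rw [hper (q * L + x), mul_comm q L, Nat.mul_add_mod, Nat.mod_eq_of_lt hx]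
    rw [this]; ring

lemma count_Icc (P : ℕ → Prop) [DecidablePred P] {L M : ℕ} (hL : L ≠ 0) (hLM : L ∣ M)
    (hper : ∀ k, P k ↔ P (k % L)) :
    ((Finset.Icc 1 M).filter P).card = (M / L) * ((Finset.range L).filter P).card := by
  obtain ⟨q, rfl⟩ := hLM
  have hq : L * q / L = q := Nat.mul_div_cancel_left q (Nat.pos_of_ne_zero hL)
  rw [hq]
  rcases Nat.eq_zero_or_pos q with rfl | hq0
  · simp
  have h0 : 0 < L * q := Nat.mul_pos (Nat.pos_of_ne_zero hL) hq0
  -- Icc 1 (L*q) and range (L*q) have the same filtered cardinality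
  have key : ((Finset.Icc 1 (L * q)).filter P).card = ((Finset.range (L * q)).filter P).card := by
    have h1 : Finset.Icc 1 (L * q) = insert (L * q) (Finset.Ico 1 (L * q)) :=
      (Finset.Ico_insert_right h0).symm
    have h2 : Finset.range (L * q) = insert 0 (Finset.Ico 1 (L * q)) := by
      rw [Finset.range_eq_Ico, show (1 : ℕ) = 0 + 1 from rfl, Finset.Ico_add_one_left_eq_Ioo,
        ← Finset.Ioo_insert_left h0]
    have hP : P (L * q) ↔ P 0 := by
      rw [hper (L * q), Nat.mul_mod_right]
    rw [h1, h2, Finset.filter_insert, Finset.filter_insert]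
    by_cases hp : P (L * q)
    · rw [if_pos hp, if_pos (hP.mp hp), Finset.card_insert_of_notMem (by simp),
        Finset.card_insert_of_notMem (by simp)]
    · rw [if_neg hp, if_neg (fun h => hp (hP.mpr h))]
  rw [key, mul_comm L q, count_range_mul P L hper q]

lemma prod_ite_zero' {r : ℕ} (p : Fin r → Prop) [∀ i, Decidable (p i)]
    [Decidable (∀ i, p i)] (A : Fin r → ℂ) :
    (∏ i, if p i then A i else 0) = if ∀ i, p i then ∏ i, A i else 0 := by
  by_cases h : ∀ i, p i
  · rw [if_pos h]
    exact Finset.prod_congr rfl fun i _ => if_pos (h i)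
  · rw [if_neg h]
    push_neg at h
    obtain ⟨i, hi⟩ := h
    exact Finset.prod_eq_zero (Finset.mem_univ i) (if_neg hi)

theorem stmt0 (r : ℕ) (hr : 1 ≤ r) (g : Fin r → Polynomial ℤ) (f : Fin r → ℕ → ℂ)
    (m : Fin r → ℕ) (hm : ∀ i, 0 < m i) (M : ℕ) (hM0 : 0 < M)
    (hM : (Finset.univ.lcm m) ∣ M) :
    (1 / (M : ℂ)) * ∑ k ∈ Finset.Icc 1 M, ∏ i, f i (Int.gcd ((g i).eval (k : ℤ)) (m i)) =
      ∑ d ∈ Fintype.piFinset (fun i => (m i).divisors),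
        (∏ i, muConv (f i) (d i)) / ((Finset.univ.lcm d : ℕ) : ℂ) * (NG g d : ℂ) := by
  classical
  -- Step 1: Möbius expansion of each factor
  have step1 : ∀ (k : ℕ) (i : Fin r),
      f i (Int.gcd ((g i).eval (k : ℤ)) (m i)) =
        ∑ e ∈ (m i).divisors, if (e : ℤ) ∣ (g i).eval (k : ℤ) then muConv (f i) e else 0 := by
    intro k i
    have hgcd : (Int.gcd ((g i).eval (k : ℤ)) (m i)) ≠ 0 := by
      intro h
      have := (Int.gcd_eq_zero_iff.mp h).2
      simp only [Int.natCast_eq_zero] at this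
      exact (hm i).ne' this
    rw [← sum_muConv (f i) hgcd, ← Finset.sum_filter]
    congr 1
    ext e
    simp only [Nat.mem_divisors, Finset.mem_filter]
    constructor
    · intro ⟨he, _⟩
      have h1 : (e : ℤ) ∣ (Int.gcd ((g i).eval (k : ℤ)) (m i) : ℤ) := Int.natCast_dvd_natCast.mpr he
      refine ⟨⟨?_, (hm i).ne'⟩, h1.trans (Int.gcd_dvd_left _ _)⟩
      exact_mod_cast h1.trans (Int.gcd_dvd_right ((g i).eval (k : ℤ)) (m i))
    · intro ⟨⟨he, _⟩, hdvd⟩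
      refine ⟨?_, hgcd⟩
      have := Int.dvd_gcd hdvd (Int.natCast_dvd_natCast.mpr he)
      exact_mod_cast this
  -- rewrite LHS
  have lhseq : ∑ k ∈ Finset.Icc 1 M, ∏ i, f i (Int.gcd ((g i).eval (k : ℤ)) (m i)) =
      ∑ d ∈ Fintype.piFinset (fun i => (m i).divisors),
        (∏ i, muConv (f i) (d i)) *
          (((Finset.Icc 1 M).filter (fun k : ℕ => ∀ i, (d i : ℤ) ∣ (g i).eval (k : ℤ))).card : ℂ) := by
    rw [Finset.sum_congr rfl (fun k _ => by
      rw [Finset.prod_congr rfl (fun i _ => step1 k i), Finset.prod_univ_sum])]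
    rw [Finset.sum_comm]
    refine Finset.sum_congr rfl fun d _ => ?_
    calc ∑ k ∈ Finset.Icc 1 M,
            ∏ i, (if (d i : ℤ) ∣ (g i).eval (k : ℤ) then muConv (f i) (d i) else 0)
        = ∑ k ∈ Finset.Icc 1 M,
            (if (∀ i, (d i : ℤ) ∣ (g i).eval (k : ℤ)) then ∏ i, muConv (f i) (d i) else 0) :=
          Finset.sum_congr rfl fun k _ => prod_ite_zero' _ _
      _ = ∑ _k ∈ (Finset.Icc 1 M).filter (fun k : ℕ => ∀ i, (d i : ℤ) ∣ (g i).eval (k : ℤ)),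
            ∏ i, muConv (f i) (d i) := (Finset.sum_filter _ _).symm
      _ = (∏ i, muConv (f i) (d i)) *
            (((Finset.Icc 1 M).filter
              (fun k : ℕ => ∀ i, (d i : ℤ) ∣ (g i).eval (k : ℤ))).card : ℂ) := by
          rw [Finset.sum_const, nsmul_eq_mul, mul_comm]
  rw [lhseq, Finset.mul_sum]
  refine Finset.sum_congr rfl fun d hd => ?_
  -- facts about d
  have hdmem : ∀ i, d i ∈ (m i).divisors := by
    intro i; exact (Fintype.mem_piFinset.mp hd) i
  have hdpos : ∀ i, d i ≠ 0 := fun i => (Nat.pos_of_mem_divisors (hdmem i)).ne'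
  set L := Finset.univ.lcm d with hLdef
  have hL0 : L ≠ 0 := by
    intro h
    rw [hLdef, Finset.lcm_eq_zero_iff] at h
    obtain ⟨i, _, hi⟩ := h
    exact hdpos i hi
  have hdL : ∀ i, d i ∣ L := fun i => Finset.dvd_lcm (Finset.mem_univ i)
  have hLM : L ∣ M := by
    refine dvd_trans ?_ hM
    exact Finset.lcm_dvd fun i _ =>
      dvd_trans (Nat.dvd_of_mem_divisors (hdmem i)) (Finset.dvd_lcm (Finset.mem_univ i))
  -- periodicity
  have hper : ∀ k : ℕ, (∀ i, (d i : ℤ) ∣ (g i).eval (k : ℤ)) ↔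
      (∀ i, (d i : ℤ) ∣ (g i).eval ((k % L : ℕ) : ℤ)) := by
    intro k
    have hdiff : ∀ i, (d i : ℤ) ∣ ((k : ℤ) - ((k % L : ℕ) : ℤ)) := by
      intro i
      have h := Nat.mod_add_div k L
      have heq : (k : ℤ) - ((k % L : ℕ) : ℤ) = ((L * (k / L) : ℕ) : ℤ) := by
        zify at h
        push_cast
        push_cast at h
        linarith
      rw [heq]
      exact_mod_cast (hdL i).trans (Dvd.intro (k / L) rfl)
    constructor
    · intro h i
      exact (dvd_iff_dvd_of_dvd_sub ((hdiff i).trans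
        (Polynomial.sub_dvd_eval_sub _ _ (g i)))).mp (h i)
    · intro h i
      exact (dvd_iff_dvd_of_dvd_sub ((hdiff i).trans
        (Polynomial.sub_dvd_eval_sub _ _ (g i)))).mpr (h i)
  -- counting
  have hcount : ((Finset.Icc 1 M).filter (fun k : ℕ => ∀ i, (d i : ℤ) ∣ (g i).eval (k : ℤ))).card
      = (M / L) * NG g d := by
    rw [NG, ← hLdef]
    exact count_Icc _ hL0 hLM hper
  rw [hcount]
  -- algebra
  have hMne : (M : ℂ) ≠ 0 := Nat.cast_ne_zero.mpr hM0.ne'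
  have hLne : (L : ℂ) ≠ 0 := Nat.cast_ne_zero.mpr hL0
  have hcast : ((M / L : ℕ) : ℂ) = (M : ℂ) / (L : ℂ) := Nat.cast_div hLM hLne
  push_cast [hcast]
  field_simp
end

section
/- For every system G = (g₁,…,g_r) of polynomials with integer coefficients, the function (m₁,…,m_r) ↦ η_G(m₁,…,m_r) is multiplicative; that is, η_G(m₁n₁,…,m_r n_r) = η_G(m₁,…,m_r) · η_G(n₁,…,n_r) holds for all m₁,…,m_r,n₁,…,n_r ∈ ℕ with gcd(m₁⋯m_r, n₁⋯n_r) = 1. -/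
open Finset

/-- `etaG g d` is the number of residues `x` modulo `lcm[d₁,…,d_r]` satisfying the
simultaneous congruences `gᵢ(x) ≡ 0 (mod dᵢ)` together with `gcd(x, dᵢ) = 1` for all `i`. -/
def etaG {r : ℕ} (g : Fin r → Polynomial ℤ) (d : Fin r → ℕ) : ℕ :=
  ((Finset.range (Finset.univ.lcm d)).filter
    (fun x : ℕ => (∀ i, (d i : ℤ) ∣ (g i).eval (x : ℤ)) ∧ ∀ i, Nat.gcd x (d i) = 1)).card

lemma dvd_eval_congr (p : Polynomial ℤ) {a b d : ℕ} (hab : a ≡ b [MOD d]) :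
    ((d : ℤ) ∣ p.eval (a : ℤ)) ↔ ((d : ℤ) ∣ p.eval (b : ℤ)) := by
  have h1 : ((a : ℤ)) % (d : ℤ) = (b : ℤ) % (d : ℤ) := by exact_mod_cast hab
  have h2 : (d : ℤ) ∣ (a : ℤ) - (b : ℤ) := Int.ModEq.dvd (Int.ModEq.symm h1)
  have h3 : (d : ℤ) ∣ p.eval (a : ℤ) - p.eval (b : ℤ) :=
    dvd_trans h2 (Polynomial.sub_dvd_eval_sub _ _ p)
  constructor
  · intro hd
    have := dvd_sub hd h3
    simpa using this
  · intro hd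
    have := dvd_add hd h3
    simpa using this

lemma gcd_congr {a b d : ℕ} (hab : a ≡ b [MOD d]) : Nat.gcd a d = Nat.gcd b d := by
  rw [Nat.gcd_comm a d, Nat.gcd_comm b d, Nat.gcd_rec d a, Nat.gcd_rec d b, hab]

theorem stmt2 (r : ℕ) (g : Fin r → Polynomial ℤ) (m n : Fin r → ℕ)
    (hm : ∀ i, 0 < m i) (hn : ∀ i, 0 < n i)
    (h : Nat.Coprime (∏ i, m i) (∏ i, n i)) :
    etaG g (fun i => m i * n i) = etaG g m * etaG g n := by
  have hcop : ∀ i, Nat.Coprime (m i) (n i) := fun i =>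
    Nat.Coprime.coprime_dvd_left (Finset.dvd_prod_of_mem m (mem_univ i))
      (Nat.Coprime.coprime_dvd_right (Finset.dvd_prod_of_mem n (mem_univ i)) h)
  set M := Finset.univ.lcm m with hMdef
  set N := Finset.univ.lcm n with hNdef
  have hmM : ∀ i, m i ∣ M := fun i => Finset.dvd_lcm (mem_univ i)
  have hnN : ∀ i, n i ∣ N := fun i => Finset.dvd_lcm (mem_univ i)
  have hMne : M ≠ 0 := by
    intro h0
    rw [hMdef, Finset.lcm_eq_zero_iff] at h0
    obtain ⟨i, -, hi⟩ := h0
    exact (hm i).ne' hi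
  have hNne : N ≠ 0 := by
    intro h0
    rw [hNdef, Finset.lcm_eq_zero_iff] at h0
    obtain ⟨i, -, hi⟩ := h0
    exact (hn i).ne' hi
  have hMN : Nat.Coprime M N :=
    Nat.Coprime.coprime_dvd_left (Finset.lcm_dvd fun i _ => Finset.dvd_prod_of_mem m (mem_univ i))
      (Nat.Coprime.coprime_dvd_right
        (Finset.lcm_dvd fun i _ => Finset.dvd_prod_of_mem n (mem_univ i)) h)
  have hL : Finset.univ.lcm (fun i => m i * n i) = M * N := by
    apply Nat.dvd_antisymm
    · exact Finset.lcm_dvd fun i _ => mul_dvd_mul (hmM i) (hnN i)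
    · refine Nat.Coprime.mul_dvd_of_dvd_of_dvd hMN ?_ ?_
      · exact Finset.lcm_dvd fun i _ =>
          dvd_trans (dvd_mul_right (m i) (n i)) (Finset.dvd_lcm (mem_univ i))
      · exact Finset.lcm_dvd fun i _ =>
          dvd_trans (dvd_mul_left (n i) (m i)) (Finset.dvd_lcm (mem_univ i))
  have hMNne : M * N ≠ 0 := mul_ne_zero hMne hNne
  unfold etaG
  rw [hL, ← Finset.card_product]
  apply Finset.card_nbij' (fun x => (x % M, x % N))
    (fun ab => (Nat.chineseRemainder hMN ab.1 ab.2 : ℕ) % (M * N))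
  · -- forward membership
    intro x hx
    simp only [Finset.mem_coe, Finset.mem_filter, Finset.mem_range] at hx
    obtain ⟨hxlt, hdvd, hgcd⟩ := hx
    simp only [Finset.mem_coe, Finset.mem_product, Finset.mem_filter, Finset.mem_range]
    have hxm : ∀ i, x ≡ x % M [MOD m i] := fun i =>
      (Nat.ModEq.symm (Nat.mod_modEq x M)).of_dvd (hmM i)
    have hxn : ∀ i, x ≡ x % N [MOD n i] := fun i =>
      (Nat.ModEq.symm (Nat.mod_modEq x N)).of_dvd (hnN i)
    refine ⟨⟨Nat.mod_lt x (Nat.pos_of_ne_zero hMne), ?_, ?_⟩,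
      ⟨Nat.mod_lt x (Nat.pos_of_ne_zero hNne), ?_, ?_⟩⟩
    · intro i
      have := hdvd i
      have hmi : (m i : ℤ) ∣ (g i).eval (x : ℤ) := by
        refine dvd_trans ?_ this
        exact_mod_cast (dvd_mul_right (m i) (n i))
      exact (dvd_eval_congr (g i) (hxm i)).mp hmi
    · intro i
      rw [← gcd_congr (hxm i)]
      have : Nat.gcd x (m i) ∣ Nat.gcd x (m i * n i) :=
        Nat.dvd_gcd (Nat.gcd_dvd_left _ _)
          (dvd_trans (Nat.gcd_dvd_right _ _) (dvd_mul_right _ _))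
      exact Nat.eq_one_of_dvd_one (hgcd i ▸ this)
    · intro i
      have := hdvd i
      have hni : (n i : ℤ) ∣ (g i).eval (x : ℤ) := by
        refine dvd_trans ?_ this
        exact_mod_cast (dvd_mul_left (n i) (m i))
      exact (dvd_eval_congr (g i) (hxn i)).mp hni
    · intro i
      rw [← gcd_congr (hxn i)]
      have : Nat.gcd x (n i) ∣ Nat.gcd x (m i * n i) :=
        Nat.dvd_gcd (Nat.gcd_dvd_left _ _)
          (dvd_trans (Nat.gcd_dvd_right _ _) (dvd_mul_left _ _))
      exact Nat.eq_one_of_dvd_one (hgcd i ▸ this)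
  · -- backward membership
    rintro ⟨a, b⟩ hab
    simp only [Finset.mem_coe, Finset.mem_product, Finset.mem_filter, Finset.mem_range] at hab
    obtain ⟨⟨halt, hadvd, hagcd⟩, hblt, hbdvd, hbgcd⟩ := hab
    set k := (Nat.chineseRemainder hMN a b : ℕ) with hk
    have hka : k ≡ a [MOD M] := (Nat.chineseRemainder hMN a b).prop.1
    have hkb : k ≡ b [MOD N] := (Nat.chineseRemainder hMN a b).prop.2
    have hja : k % (M * N) ≡ a [MOD M] :=
      Nat.ModEq.trans ((Nat.mod_modEq k (M * N)).of_dvd (dvd_mul_right M N)) hka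
    have hjb : k % (M * N) ≡ b [MOD N] :=
      Nat.ModEq.trans ((Nat.mod_modEq k (M * N)).of_dvd (dvd_mul_left N M)) hkb
    simp only [Finset.mem_coe, Finset.mem_filter, Finset.mem_range]
    refine ⟨Nat.mod_lt k (Nat.pos_of_ne_zero hMNne), ?_, ?_⟩
    · intro i
      have hjm : (m i : ℤ) ∣ (g i).eval ((k % (M * N) : ℕ) : ℤ) :=
        (dvd_eval_congr (g i) (hja.of_dvd (hmM i))).mpr (hadvd i)
      have hjn : (n i : ℤ) ∣ (g i).eval ((k % (M * N) : ℕ) : ℤ) :=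
        (dvd_eval_congr (g i) (hjb.of_dvd (hnN i))).mpr (hbdvd i)
      have hic : IsCoprime ((m i : ℤ)) ((n i : ℤ)) := by
        rw [Int.isCoprime_iff_gcd_eq_one]
        exact_mod_cast (hcop i)
      have := hic.mul_dvd hjm hjn
      exact_mod_cast this
    · intro i
      have h1 : Nat.Coprime (k % (M * N)) (m i) := by
        rw [Nat.Coprime, gcd_congr (hja.of_dvd (hmM i))]; exact hagcd i
      have h2 : Nat.Coprime (k % (M * N)) (n i) := by
        rw [Nat.Coprime, gcd_congr (hjb.of_dvd (hnN i))]; exact hbgcd i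
      exact Nat.Coprime.mul_right h1 h2
  · -- left inverse
    intro x hx
    simp only [Finset.mem_coe, Finset.mem_filter, Finset.mem_range] at hx
    set k := (Nat.chineseRemainder hMN (x % M) (x % N) : ℕ)
    have hkx : x ≡ k [MOD M * N] := by
      rw [← Nat.modEq_and_modEq_iff_modEq_mul hMN]
      exact ⟨(Nat.mod_modEq x M).symm.trans (Nat.chineseRemainder hMN (x % M) (x % N)).prop.1.symm,
        (Nat.mod_modEq x N).symm.trans (Nat.chineseRemainder hMN (x % M) (x % N)).prop.2.symm⟩
    have : k % (M * N) = x % (M * N) := hkx.symm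
    show k % (M * N) = x
    rw [this, Nat.mod_eq_of_lt hx.1]
  · -- right inverse
    rintro ⟨a, b⟩ hab
    simp only [Finset.mem_coe, Finset.mem_product, Finset.mem_filter, Finset.mem_range] at hab
    set k := (Nat.chineseRemainder hMN a b : ℕ)
    have hka : k ≡ a [MOD M] := (Nat.chineseRemainder hMN a b).prop.1
    have hkb : k ≡ b [MOD N] := (Nat.chineseRemainder hMN a b).prop.2
    have h1 : k % (M * N) % M = a := by
      have hm1 : k % (M * N) ≡ a [MOD M] :=
        Nat.ModEq.trans ((Nat.mod_modEq k (M * N)).of_dvd (dvd_mul_right M N)) hka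
      calc k % (M * N) % M = a % M := hm1
        _ = a := Nat.mod_eq_of_lt hab.1.1
    have h2 : k % (M * N) % N = b := by
      have hn1 : k % (M * N) ≡ b [MOD N] :=
        Nat.ModEq.trans ((Nat.mod_modEq k (M * N)).of_dvd (dvd_mul_left N M)) hkb
      calc k % (M * N) % N = b % N := hn1
        _ = b := Nat.mod_eq_of_lt hab.2.1
    show (k % (M * N) % M, k % (M * N) % N) = (a, b)
    rw [h1, h2]
end

section
/- If F = (f₁,…,f_r) is a system of multiplicative arithmetical functions of one variable and G = (g₁,…,g_r) is any system of polynomials with integer coefficients, then the function of r variables S_F^{(G)}(m₁,…,m_r) := (1/m) · ∑_{k=1}^{m} f₁(gcd(g₁(k), m₁)) ⋯ f_r(gcd(g_r(k), m_r)), where m = lcm[m₁,…,m_r], is multiplicative: S_F^{(G)}(m₁n₁,…,m_r n_r) = S_F^{(G)}(m₁,…,m_r) · S_F^{(G)}(n₁,…,n_r) whenever gcd(m₁⋯m_r, n₁⋯n_r) = 1. -/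
open Finset

lemma int_gcd_congr {a b : ℤ} (m : ℕ) (h : (m:ℤ) ∣ a - b) : Int.gcd a m = Int.gcd b m := by
  have key : ∀ x y : ℤ, (m:ℤ) ∣ x - y → Int.gcd x m ∣ Int.gcd y m := by
    intro x y hxy
    rw [← Int.natCast_dvd_natCast]
    apply Int.dvd_coe_gcd
    · have h1 : (Int.gcd x m : ℤ) ∣ x := Int.gcd_dvd_left _ _
      have h2 : (Int.gcd x m : ℤ) ∣ (x - y) := (Int.gcd_dvd_right _ _).trans hxy
      simpa using dvd_sub h1 h2
    · exact Int.gcd_dvd_right _ _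
  exact Nat.dvd_antisymm (key a b h) (key b a (by simpa using h.neg_right))

lemma gcd_eval_of_modeq (g : Polynomial ℤ) (m : ℕ) {a b : ℕ} (h : a ≡ b [MOD m]) :
    Int.gcd (g.eval (a:ℤ)) m = Int.gcd (g.eval (b:ℤ)) m := by
  apply int_gcd_congr
  exact dvd_trans (by simpa using (h.symm).dvd) (Polynomial.sub_dvd_eval_sub _ _ g)

lemma nat_gcd_mul_coprime (k m n : ℕ) (h : Nat.Coprime m n) :
    Nat.gcd k (m * n) = Nat.gcd k m * Nat.gcd k n := by
  apply Nat.dvd_antisymm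
  · have hx : Nat.gcd k (m*n) ∣ Nat.gcd (Nat.gcd k (m*n)) m * Nat.gcd (Nat.gcd k (m*n)) n :=
      Nat.dvd_gcd_mul_gcd_iff_dvd_mul.mpr (Nat.gcd_dvd_right _ _)
    exact hx.trans (mul_dvd_mul
      (Nat.dvd_gcd ((Nat.gcd_dvd_left _ _).trans (Nat.gcd_dvd_left _ _)) (Nat.gcd_dvd_right _ _))
      (Nat.dvd_gcd ((Nat.gcd_dvd_left _ _).trans (Nat.gcd_dvd_left _ _)) (Nat.gcd_dvd_right _ _)))
  · refine Nat.dvd_gcd ?_ (mul_dvd_mul (Nat.gcd_dvd_right _ _) (Nat.gcd_dvd_right _ _))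
    exact Nat.Coprime.mul_dvd_of_dvd_of_dvd
      ((h.coprime_dvd_left (Nat.gcd_dvd_right k m)).coprime_dvd_right (Nat.gcd_dvd_right k n))
      (Nat.gcd_dvd_left _ _) (Nat.gcd_dvd_left _ _)

lemma int_gcd_nat (a : ℤ) (x : ℕ) : Int.gcd a (x:ℤ) = Nat.gcd a.natAbs x := by
  simp [Int.gcd]

lemma sum_Icc_eq_sum_zmod (L : ℕ) [NeZero L] (H : ZMod L → ℂ) :
    ∑ k ∈ Icc 1 L, H (k : ZMod L) = ∑ x : ZMod L, H x := by
  have hL : 0 < L := Nat.pos_of_ne_zero (NeZero.ne L)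
  refine Finset.sum_nbij' (fun k => (k : ZMod L)) (fun x => if x = 0 then L else x.val)
    ?_ ?_ ?_ ?_ ?_
  · intro a _; exact mem_univ _
  · intro x _
    show (if x = 0 then L else x.val) ∈ Icc 1 L
    by_cases hx : x = 0
    · rw [if_pos hx, mem_Icc]
      omega
    · rw [if_neg hx, mem_Icc]
      exact ⟨Nat.one_le_iff_ne_zero.mpr (fun h0 => hx ((ZMod.val_eq_zero x).mp h0)),
        (ZMod.val_lt x).le⟩
  · intro k hk
    simp only [mem_Icc] at hk
    show (if (k : ZMod L) = 0 then L else (k : ZMod L).val) = k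
    by_cases h0 : (k : ZMod L) = 0
    · rw [if_pos h0]
      have hd : L ∣ k := (ZMod.natCast_eq_zero_iff k L).mp h0
      have := Nat.le_of_dvd (by omega) hd
      omega
    · rw [if_neg h0, ZMod.val_natCast]
      have hkL : k < L := by
        rcases Nat.lt_or_ge k L with h1 | h1
        · exact h1
        · exfalso; apply h0
          have : k = L := le_antisymm hk.2 h1
          simp [this]
      exact Nat.mod_eq_of_lt hkL
  · intro x _
    show ((if x = 0 then L else x.val : ℕ) : ZMod L) = x
    by_cases hx : x = 0
    · simp [hx]
    · rw [if_neg hx]; exact ZMod.natCast_rightInverse x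
  · intro k _; rfl

/-- `SF f g m = (1/lcm[m₁,…,m_r]) ∑_{k=1}^{lcm[m₁,…,m_r]} ∏ᵢ fᵢ(gcd(gᵢ(k), mᵢ))`. -/
noncomputable def SF {r : ℕ} (f : Fin r → ℕ → ℂ) (g : Fin r → Polynomial ℤ)
    (m : Fin r → ℕ) : ℂ :=
  (1 / ((Finset.univ.lcm m : ℕ) : ℂ)) *
    ∑ k ∈ Finset.Icc 1 (Finset.univ.lcm m),
      ∏ i, f i (Int.gcd ((g i).eval (k : ℤ)) (m i))

set_option maxHeartbeats 1000000 in
theorem stmt3 (r : ℕ) (f : Fin r → ℕ → ℂ) (g : Fin r → Polynomial ℤ)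
    (hf0 : ∀ i, f i ≠ 0)
    (hf : ∀ i, ∀ a b : ℕ, Nat.Coprime a b → f i (a * b) = f i a * f i b)
    (m n : Fin r → ℕ) (hm : ∀ i, 0 < m i) (hn : ∀ i, 0 < n i)
    (h : Nat.Coprime (∏ i, m i) (∏ i, n i)) :
    SF f g (fun i => m i * n i) = SF f g m * SF f g n := by
  classical
  set M := Finset.univ.lcm m with hMdef
  set N := Finset.univ.lcm n with hNdef
  have hM0 : M ≠ 0 := by
    rw [hMdef, Ne, Finset.lcm_eq_zero_iff]
    rintro ⟨i, -, hi⟩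
    exact (hm i).ne' hi
  have hN0 : N ≠ 0 := by
    rw [hNdef, Ne, Finset.lcm_eq_zero_iff]
    rintro ⟨i, -, hi⟩
    exact (hn i).ne' hi
  haveI : NeZero M := ⟨hM0⟩
  haveI : NeZero N := ⟨hN0⟩
  haveI : NeZero (M * N) := ⟨mul_ne_zero hM0 hN0⟩
  have hMdvd : ∀ i, m i ∣ M := fun i => Finset.dvd_lcm (mem_univ i)
  have hNdvd : ∀ i, n i ∣ N := fun i => Finset.dvd_lcm (mem_univ i)
  have hMprod : M ∣ ∏ i, m i :=
    Finset.lcm_dvd fun i _ => Finset.dvd_prod_of_mem m (mem_univ i)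
  have hNprod : N ∣ ∏ i, n i :=
    Finset.lcm_dvd fun i _ => Finset.dvd_prod_of_mem n (mem_univ i)
  have hMN : Nat.Coprime M N := (h.coprime_dvd_left hMprod).coprime_dvd_right hNprod
  have hmn : ∀ i, Nat.Coprime (m i) (n i) := fun i =>
    (h.coprime_dvd_left (Finset.dvd_prod_of_mem m (mem_univ i))).coprime_dvd_right
      (Finset.dvd_prod_of_mem n (mem_univ i))
  have hL : Finset.univ.lcm (fun i => m i * n i) = M * N := by
    apply Nat.dvd_antisymm
    · exact Finset.lcm_dvd fun i _ => mul_dvd_mul (hMdvd i) (hNdvd i)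
    · refine Nat.Coprime.mul_dvd_of_dvd_of_dvd hMN ?_ ?_
      · exact Finset.lcm_dvd fun i _ =>
          (dvd_mul_right (m i) (n i)).trans (Finset.dvd_lcm (mem_univ i))
      · exact Finset.lcm_dvd fun i _ =>
          (dvd_mul_left (n i) (m i)).trans (Finset.dvd_lcm (mem_univ i))
  -- the three summand functions on residues
  set A : ZMod M → ℂ := fun x => ∏ i, f i (Int.gcd ((g i).eval (x.val : ℤ)) (m i)) with hA
  set B : ZMod N → ℂ := fun x => ∏ i, f i (Int.gcd ((g i).eval (x.val : ℤ)) (n i)) with hB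
  have hsumM : ∑ k ∈ Icc 1 M, ∏ i, f i (Int.gcd ((g i).eval (k:ℤ)) (m i))
      = ∑ x : ZMod M, A x := by
    rw [← sum_Icc_eq_sum_zmod M A]
    refine Finset.sum_congr rfl fun k _ => Finset.prod_congr rfl fun i _ => ?_
    congr 1
    simp only [ZMod.val_natCast]
    exact (gcd_eval_of_modeq (g i) (m i)
      ((Nat.mod_modEq k M).of_dvd (hMdvd i))).symm
  have hsumN : ∑ k ∈ Icc 1 N, ∏ i, f i (Int.gcd ((g i).eval (k:ℤ)) (n i))
      = ∑ x : ZMod N, B x := by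
    rw [← sum_Icc_eq_sum_zmod N B]
    refine Finset.sum_congr rfl fun k _ => Finset.prod_congr rfl fun i _ => ?_
    congr 1
    simp only [ZMod.val_natCast]
    exact (gcd_eval_of_modeq (g i) (n i)
      ((Nat.mod_modEq k N).of_dvd (hNdvd i))).symm
  -- CRT bijection
  set φ : ZMod (M * N) → ZMod M × ZMod N :=
    fun x => ((x.val : ZMod M), (x.val : ZMod N)) with hφ
  have hφbij : Function.Bijective φ := by
    rw [Fintype.bijective_iff_injective_and_card]
    constructor
    · intro x y hxy
      rw [hφ] at hxy
      have h1 : x.val ≡ y.val [MOD M] :=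
        (ZMod.natCast_eq_natCast_iff _ _ _).mp (congrArg Prod.fst hxy)
      have h2 : x.val ≡ y.val [MOD N] :=
        (ZMod.natCast_eq_natCast_iff _ _ _).mp (congrArg Prod.snd hxy)
      have h3 : x.val ≡ y.val [MOD M * N] :=
        (Nat.modEq_and_modEq_iff_modEq_mul hMN).mp ⟨h1, h2⟩
      have := h3.eq_of_lt_of_lt (ZMod.val_lt x) (ZMod.val_lt y)
      exact ZMod.val_injective _ this
    · simp [ZMod.card]
  have hsumMN : ∑ k ∈ Icc 1 (M * N),
        ∏ i, f i (Int.gcd ((g i).eval (k:ℤ)) (m i * n i))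
      = (∑ x : ZMod M, A x) * (∑ y : ZMod N, B y) := by
    have hC : ∀ k ∈ Icc 1 (M * N),
        ∏ i, f i (Int.gcd ((g i).eval (k:ℤ)) (m i * n i))
        = (fun x : ZMod (M * N) => A (φ x).1 * B (φ x).2) (k : ZMod (M * N)) := by
      intro k _
      simp only [hφ, hA, hB, ZMod.val_natCast, ← Finset.prod_mul_distrib]
      refine Finset.prod_congr rfl fun i _ => ?_
      have e1 : Int.gcd ((g i).eval ((k % (M * N) % M : ℕ) : ℤ)) (m i)
          = Int.gcd ((g i).eval (k:ℤ)) (m i) :=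
        gcd_eval_of_modeq (g i) (m i)
          (((Nat.mod_modEq _ M).of_dvd (hMdvd i)).trans
            ((Nat.mod_modEq k (M * N)).of_dvd ((hMdvd i).trans (dvd_mul_right M N))))
      have e2 : Int.gcd ((g i).eval ((k % (M * N) % N : ℕ) : ℤ)) (n i)
          = Int.gcd ((g i).eval (k:ℤ)) (n i) :=
        gcd_eval_of_modeq (g i) (n i)
          (((Nat.mod_modEq _ N).of_dvd (hNdvd i)).trans
            ((Nat.mod_modEq k (M * N)).of_dvd ((hNdvd i).trans (dvd_mul_left N M))))
      rw [e1, e2]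
      -- now split the gcd
      have hsplit : Int.gcd ((g i).eval (k:ℤ)) ((m i * n i : ℕ) : ℤ)
          = Int.gcd ((g i).eval (k:ℤ)) (m i) * Int.gcd ((g i).eval (k:ℤ)) (n i) := by
        rw [int_gcd_nat, int_gcd_nat, int_gcd_nat, nat_gcd_mul_coprime _ _ _ (hmn i)]
      push_cast at hsplit ⊢
      rw [hsplit]
      apply hf
      rw [int_gcd_nat, int_gcd_nat]
      exact ((hmn i).coprime_dvd_left (Nat.gcd_dvd_right _ _)).coprime_dvd_right
        (Nat.gcd_dvd_right _ _)
    calc ∑ k ∈ Icc 1 (M * N), ∏ i, f i (Int.gcd ((g i).eval (k:ℤ)) (m i * n i))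
        = ∑ k ∈ Icc 1 (M * N),
            (fun x : ZMod (M * N) => A (φ x).1 * B (φ x).2) (k : ZMod (M * N)) :=
          Finset.sum_congr rfl hC
      _ = ∑ x : ZMod (M * N), A (φ x).1 * B (φ x).2 := by
          exact sum_Icc_eq_sum_zmod (M * N) (fun x => A (φ x).1 * B (φ x).2)
      _ = ∑ p : ZMod M × ZMod N, A p.1 * B p.2 :=
          Fintype.sum_bijective φ hφbij _ (fun p => A p.1 * B p.2) (fun x => rfl)
      _ = (∑ x : ZMod M, A x) * (∑ y : ZMod N, B y) := by
          rw [Fintype.sum_prod_type, ← Finset.sum_mul_sum]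
  -- put everything together
  simp only [SF]
  rw [hL, ← hMdef, ← hNdef]
  push_cast
  rw [hsumM, hsumN, hsumMN]
  have hMC : (M : ℂ) ≠ 0 := Nat.cast_ne_zero.mpr hM0
  have hNC : (N : ℂ) ≠ 0 := Nat.cast_ne_zero.mpr hN0
  field_simp
end

section
/- Let r ≥ 1, m₁,…,m_r ∈ ℕ, m := lcm[m₁,…,m_r], and let M ∈ ℕ with m ∣ M. Then (1/M) · ∑_{k=1}^{M} gcd(k, m₁) ⋯ gcd(k, m_r) = ∑_{d₁ ∣ m₁, …, d_r ∣ m_r} φ(d₁) ⋯ φ(d_r) / lcm[d₁,…,d_r]. -/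
open Finset

lemma gcd_eq_sum_totient (k n : ℕ) (hn : 0 < n) :
    ((Nat.gcd k n : ℕ) : ℚ) = ∑ d ∈ n.divisors, if d ∣ k then ((Nat.totient d : ℕ) : ℚ) else 0 := by
  rw [← Finset.sum_filter]
  have hfil : n.divisors.filter (fun d => d ∣ k) = (Nat.gcd k n).divisors := by
    ext d
    simp only [Finset.mem_filter, Nat.mem_divisors]
    constructor
    · rintro ⟨⟨hdn, _⟩, hdk⟩
      exact ⟨Nat.dvd_gcd hdk hdn, Nat.gcd_ne_zero_right hn.ne'⟩
    · rintro ⟨hd, _⟩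
      exact ⟨⟨hd.trans (Nat.gcd_dvd_right k n), hn.ne'⟩, hd.trans (Nat.gcd_dvd_left k n)⟩
  rw [hfil]
  rw [← Nat.cast_sum]
  norm_cast
  exact (Nat.sum_totient _).symm

theorem stmt4 (r : ℕ) (hr : 1 ≤ r) (m : Fin r → ℕ) (hm : ∀ i, 0 < m i)
    (M : ℕ) (hM0 : 0 < M) (hM : (Finset.univ.lcm m) ∣ M) :
    (1 / (M : ℚ)) * ∑ k ∈ Finset.Icc 1 M, ((∏ i, Nat.gcd k (m i) : ℕ) : ℚ) =
      ∑ d ∈ Fintype.piFinset (fun i => (m i).divisors),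
        (∏ i, (Nat.totient (d i) : ℚ)) / ((Finset.univ.lcm d : ℕ) : ℚ) := by
  have hLpos : ∀ d ∈ Fintype.piFinset (fun i => (m i).divisors), 0 < Finset.univ.lcm d ∧ Finset.univ.lcm d ∣ M := by
    intro d hd
    simp only [Fintype.mem_piFinset, Nat.mem_divisors] at hd
    constructor
    · apply Nat.pos_of_ne_zero
      rw [Ne, Finset.lcm_eq_zero_iff]
      intro h
      obtain ⟨i, _, hi⟩ := h
      exact (hd i).2 (Nat.eq_zero_of_zero_dvd (hi ▸ (hd i).1))
    · refine dvd_trans ?_ hM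
      exact Finset.lcm_dvd (fun i _ => ((hd i).1).trans (Finset.dvd_lcm (Finset.mem_univ i)))
  have key : ∀ k : ℕ, ((∏ i, Nat.gcd k (m i) : ℕ) : ℚ)
      = ∑ d ∈ Fintype.piFinset (fun i => (m i).divisors),
          if Finset.univ.lcm d ∣ k then (∏ i, (Nat.totient (d i) : ℚ)) else 0 := by
    intro k
    push_cast
    have h1 : ∀ i : Fin r, ((Nat.gcd k (m i) : ℕ) : ℚ)
        = ∑ d ∈ (m i).divisors, if d ∣ k then ((Nat.totient d : ℕ) : ℚ) else 0 :=
      fun i => gcd_eq_sum_totient k (m i) (hm i)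
    calc ∏ i, ((Nat.gcd k (m i) : ℕ) : ℚ)
        = ∏ i, ∑ d ∈ (m i).divisors, if d ∣ k then ((Nat.totient d : ℕ) : ℚ) else 0 :=
          Finset.prod_congr rfl (fun i _ => h1 i)
      _ = ∑ d ∈ Fintype.piFinset (fun i => (m i).divisors),
            ∏ i, (if d i ∣ k then ((Nat.totient (d i) : ℕ) : ℚ) else 0) :=
          Finset.prod_univ_sum _ _
      _ = _ := by
          apply Finset.sum_congr rfl
          intro d _
          by_cases h : Finset.univ.lcm d ∣ k
          · have : ∀ i : Fin r, d i ∣ k := fun i =>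
              (Finset.dvd_lcm (Finset.mem_univ i)).trans h
            simp [this]
          · rw [Finset.lcm_dvd_iff] at h
            push_neg at h
            obtain ⟨i, _, hi⟩ := h
            rw [if_neg (by rw [Finset.lcm_dvd_iff]; push_neg; exact ⟨i, Finset.mem_univ i, hi⟩)]
            exact Finset.prod_eq_zero (Finset.mem_univ i) (if_neg hi)
  rw [Finset.sum_congr rfl (fun k _ => key k), Finset.sum_comm, Finset.mul_sum]
  apply Finset.sum_congr rfl
  intro d hd
  obtain ⟨hL0, hLM⟩ := hLpos d hd
  have hcount : ∑ k ∈ Finset.Icc 1 M, (if Finset.univ.lcm d ∣ k then (∏ i, (Nat.totient (d i) : ℚ)) else 0)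
      = (M / Finset.univ.lcm d : ℕ) * ∏ i, (Nat.totient (d i) : ℚ) := by
    rw [← Finset.sum_filter, Finset.sum_const, nsmul_eq_mul]
    congr 1
    have : Finset.Icc 1 M = Finset.Ioc 0 M := by
      ext x; simp [Nat.lt_iff_add_one_le]
    rw [this]
    norm_cast
    exact Nat.Ioc_filter_dvd_card_eq_div M _
  rw [hcount]
  have hMne : (M : ℚ) ≠ 0 := Nat.cast_ne_zero.mpr hM0.ne'
  have hLne : ((Finset.univ.lcm d : ℕ) : ℚ) ≠ 0 := Nat.cast_ne_zero.mpr hL0.ne'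
  rw [Nat.cast_div hLM hLne]
  field_simp
end

section
/- Let g be a polynomial with integer coefficients, F = (f₁,…,f_r) a system of arithmetical functions, and let m₁,…,m_r ∈ ℕ be pairwise relatively prime, m := m₁⋯m_r. Then (1/φ(m)) · ∑_{1 ≤ k ≤ m, gcd(k,m)=1} f₁(gcd(g(k), m₁)) ⋯ f_r(gcd(g(k), m_r)) = ∏_{i=1}^{r} [ (1/φ(m_i)) · ∑_{1 ≤ k ≤ m_i, gcd(k,m_i)=1} f_i(gcd(g(k), m_i)) ]. -/
open Finset

private lemma gcd_congr_of_dvd_sub {n : ℕ} {a b : ℤ} (h : (n : ℤ) ∣ a - b) :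
    Int.gcd a n = Int.gcd b n := by
  have key : ∀ {x y : ℤ}, (n : ℤ) ∣ x - y → Int.gcd x n ∣ Int.gcd y n := by
    intro x y hxy
    have hx : (Int.gcd x n : ℤ) ∣ x := Int.gcd_dvd_left x n
    have hd : (Int.gcd x n : ℤ) ∣ x - y := (Int.gcd_dvd_right x n).trans hxy
    have h1 : (Int.gcd x n : ℤ) ∣ y := by
      have := dvd_sub hx hd
      simpa using this
    exact Int.natCast_dvd_natCast.mp (Int.dvd_coe_gcd h1 (Int.gcd_dvd_right x n))
  exact Nat.dvd_antisymm (key h) (key (dvd_sub_comm.mp h))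

private lemma gcd_eval_congr (g : Polynomial ℤ) (n : ℕ) {a b : ℤ} (h : (n : ℤ) ∣ a - b) :
    Int.gcd (g.eval a) n = Int.gcd (g.eval b) n :=
  gcd_congr_of_dvd_sub (h.trans (Polynomial.sub_dvd_eval_sub a b g))

private lemma isUnit_pi_iff {ι : Type*} {M : ι → Type*} [∀ i, Monoid (M i)]
    (y : ∀ i, M i) : IsUnit y ↔ ∀ i, IsUnit (y i) := by
  constructor
  · rintro ⟨u, rfl⟩ i
    exact ⟨⟨u.val i, u.inv i, congrFun u.val_inv i, congrFun u.inv_val i⟩, rfl⟩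
  · intro h
    refine ⟨⟨y, fun i => ↑(h i).unit⁻¹, funext fun i => ?_, funext fun i => ?_⟩, rfl⟩
    · have := (h i).unit.val_inv
      simpa [(h i).unit_spec] using this
    · have := (h i).unit.inv_val
      simpa [(h i).unit_spec] using this

private lemma coprime_iff_isUnit (n : ℕ) [NeZero n] (x : ZMod n) :
    Nat.gcd (ZMod.val x) n = 1 ↔ IsUnit x := by
  have h := ZMod.isUnit_iff_coprime (ZMod.val x) n
  rw [ZMod.natCast_rightInverse x] at h
  exact h.symm

private lemma sum_Icc_coprime_eq_sum_units (n : ℕ) [NeZero n] (F : ℕ → ℂ)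
    (hF : ∀ k, F (k % n) = F k) :
    ∑ k ∈ (Finset.Icc 1 n).filter (fun k => Nat.gcd k n = 1), F k
      = ∑ x ∈ (Finset.univ : Finset (ZMod n)).filter
          (fun x => Nat.gcd (ZMod.val x) n = 1), F (ZMod.val x) := by
  have hn : 0 < n := Nat.pos_of_ne_zero (NeZero.ne n)
  rcases eq_or_lt_of_le (show 1 ≤ n from hn) with h1 | h2
  · have h1' : n = 1 := h1.symm
    subst h1'
    have e1 : ((Finset.univ : Finset (ZMod 1)).filter
        (fun x => Nat.gcd (ZMod.val x) 1 = 1)) = {0} := by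
      apply Finset.eq_singleton_iff_unique_mem.mpr
      constructor
      · exact Finset.mem_filter.mpr ⟨Finset.mem_univ _, rfl⟩
      · intro x _; exact Subsingleton.elim x 0
    have e2 : (Finset.Icc 1 1).filter (fun k => Nat.gcd k 1 = 1) = {1} := by
      simp [Finset.Icc_self, Finset.filter_singleton]
    rw [e1, e2, Finset.sum_singleton, Finset.sum_singleton]
    have : ZMod.val (0 : ZMod 1) = 0 := rfl
    rw [this]
    simpa using (hF 1).symm
  · have hfil : (Finset.Icc 1 n).filter (fun k => Nat.gcd k n = 1)
        = (Finset.range n).filter (fun k => Nat.gcd k n = 1) := by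
      ext k
      simp only [mem_filter, mem_Icc, mem_range]
      constructor
      · rintro ⟨⟨hk1, hkn⟩, hg⟩
        refine ⟨lt_of_le_of_ne hkn ?_, hg⟩
        rintro rfl
        rw [Nat.gcd_self] at hg
        omega
      · rintro ⟨hk, hg⟩
        refine ⟨⟨?_, hk.le⟩, hg⟩
        rcases Nat.eq_zero_or_pos k with rfl | h
        · rw [Nat.gcd_zero_left] at hg; omega
        · exact h
    rw [hfil]
    refine Finset.sum_nbij' (fun k => (k : ZMod n)) (fun x => ZMod.val x) ?_ ?_ ?_ ?_ ?_
    · intro k hk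
      simp only [mem_filter, mem_range] at hk ⊢
      refine ⟨mem_univ _, ?_⟩
      rw [ZMod.val_natCast_of_lt hk.1]
      exact hk.2
    · intro x hx
      simp only [mem_filter, mem_range] at hx ⊢
      exact ⟨ZMod.val_lt x, hx.2⟩
    · intro k hk
      simp only [mem_filter, mem_range] at hk
      exact ZMod.val_natCast_of_lt hk.1
    · intro x _
      exact ZMod.natCast_rightInverse x
    · intro k hk
      simp only [mem_filter, mem_range] at hk
      rw [ZMod.val_natCast_of_lt hk.1]


private lemma totient_prod_coprime {ι : Type*} (s : Finset ι) (m : ι → ℕ)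
    (h : ∀ i ∈ s, ∀ j ∈ s, i ≠ j → Nat.Coprime (m i) (m j)) :
    (∏ i ∈ s, m i).totient = ∏ i ∈ s, (m i).totient := by
  induction s using Finset.cons_induction with
  | empty => simp
  | cons a s ha ih =>
    rw [Finset.prod_cons, Finset.prod_cons,
      Nat.totient_mul (Nat.Coprime.prod_right fun i hi =>
        h a (Finset.mem_cons_self a s) i (Finset.mem_cons_of_mem hi)
          (fun hai => ha (hai ▸ hi))),
      ih (fun i hi j hj hij =>
        h i (Finset.mem_cons_of_mem hi) j (Finset.mem_cons_of_mem hj) hij)]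

private lemma mod_invariance (g : Polynomial ℤ) (n d : ℕ) (hd : d ∣ n) (k : ℕ) :
    Int.gcd (g.eval ((k % n : ℕ) : ℤ)) d = Int.gcd (g.eval (k : ℤ)) d := by
  apply gcd_eval_congr
  have h1 : ((k % n : ℕ) : ℤ) - (k : ℤ) = -((n : ℤ) * ((k : ℤ) / (n : ℤ))) := by
    push_cast [Int.emod_def]
    ring
  rw [h1]
  exact (Int.natCast_dvd_natCast.mpr hd).trans ⟨-((k : ℤ) / (n : ℤ)), by ring⟩

theorem stmt6 (r : ℕ) (hr : 1 ≤ r) (g : Polynomial ℤ) (f : Fin r → ℕ → ℂ)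
    (m : Fin r → ℕ) (hm : ∀ i, 0 < m i)
    (hcop : ∀ i j, i ≠ j → Nat.Coprime (m i) (m j)) :
    (1 / (Nat.totient (∏ i, m i) : ℂ)) *
        ∑ k ∈ (Finset.Icc 1 (∏ i, m i)).filter (fun k => Nat.gcd k (∏ i, m i) = 1),
          ∏ i, f i (Int.gcd (g.eval (k : ℤ)) (m i)) =
      ∏ i, ((1 / (Nat.totient (m i) : ℂ)) *
        ∑ k ∈ (Finset.Icc 1 (m i)).filter (fun k => Nat.gcd k (m i) = 1),
          f i (Int.gcd (g.eval (k : ℤ)) (m i))) := by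
  haveI : ∀ i, NeZero (m i) := fun i => ⟨(hm i).ne'⟩
  have hM : 0 < ∏ i, m i := Finset.prod_pos (fun i _ => hm i)
  haveI : NeZero (∏ i, m i) := ⟨hM.ne'⟩
  -- the CRT equivalence
  have e := ZMod.prodEquivPi m (fun i j h => hcop i j h)
  -- components of e
  have hcomp : ∀ (x : ZMod (∏ i, m i)) (i : Fin r),
      e x i = ((ZMod.val x : ℕ) : ZMod (m i)) := by
    intro x i
    have hdvd : m i ∣ ∏ i, m i := Finset.dvd_prod_of_mem m (Finset.mem_univ i)
    have huniq : (Pi.evalRingHom (fun i => ZMod (m i)) i).comp (e : ZMod (∏ i, m i) →+* _)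
        = ZMod.castHom hdvd (ZMod (m i)) := Subsingleton.elim _ _
    have := congrArg (fun φ => φ x) huniq
    simp only [RingHom.comp_apply, Pi.evalRingHom_apply, ZMod.castHom_apply] at this
    rw [ZMod.natCast_val]
    exact this
  -- sums of the statement, converted to ZMod sums
  have hS : ∑ k ∈ (Finset.Icc 1 (∏ i, m i)).filter (fun k => Nat.gcd k (∏ i, m i) = 1),
        ∏ i, f i (Int.gcd (g.eval (k : ℤ)) (m i))
      = ∏ i, ∑ k ∈ (Finset.Icc 1 (m i)).filter (fun k => Nat.gcd k (m i) = 1),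
          f i (Int.gcd (g.eval (k : ℤ)) (m i)) := by
    rw [sum_Icc_coprime_eq_sum_units (∏ i, m i)
      (fun k => ∏ i, f i (Int.gcd (g.eval (k : ℤ)) (m i)))
      (fun k => Finset.prod_congr rfl (fun i _ =>
        congrArg (f i) (mod_invariance g (∏ i, m i) (m i)
          (Finset.dvd_prod_of_mem m (Finset.mem_univ i)) k)))]
    rw [show (∏ i, ∑ k ∈ (Finset.Icc 1 (m i)).filter (fun k => Nat.gcd k (m i) = 1),
          f i (Int.gcd (g.eval (k : ℤ)) (m i)))
        = ∏ i, ∑ x ∈ (Finset.univ : Finset (ZMod (m i))).filter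
            (fun x => Nat.gcd (ZMod.val x) (m i) = 1),
            f i (Int.gcd (g.eval ((ZMod.val x : ℕ) : ℤ)) (m i)) from
      Finset.prod_congr rfl fun i _ => sum_Icc_coprime_eq_sum_units (m i)
        (fun k => f i (Int.gcd (g.eval (k : ℤ)) (m i)))
        (fun k => congrArg (f i) (mod_invariance g (m i) (m i) dvd_rfl k))]
    rw [Finset.prod_univ_sum]
    -- now a bijection via e
    refine Finset.sum_nbij' (fun x => e x) (fun y => e.symm y) ?_ ?_ ?_ ?_ ?_
    · intro x hx
      simp only [Finset.mem_filter, Finset.mem_univ, true_and] at hx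
      rw [Fintype.mem_piFinset]
      intro i
      simp only [Finset.mem_filter, Finset.mem_univ, true_and]
      rw [coprime_iff_isUnit]
      have hux : IsUnit x := (coprime_iff_isUnit _ x).mp hx
      have : IsUnit (e x) := hux.map e
      exact (isUnit_pi_iff (e x)).mp this i
    · intro y hy
      rw [Fintype.mem_piFinset] at hy
      simp only [Finset.mem_filter, Finset.mem_univ, true_and] at hy ⊢
      rw [coprime_iff_isUnit]
      have : IsUnit y := (isUnit_pi_iff y).mpr
        (fun i => (coprime_iff_isUnit _ (y i)).mp (hy i))
      have := this.map e.symm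
      simpa using this
    · intro x _; exact e.symm_apply_apply x
    · intro y _; exact e.apply_symm_apply y
    · intro x _
      refine Finset.prod_congr rfl (fun i _ => ?_)
      congr 1
      beta_reduce
      rw [hcomp x i, ZMod.val_natCast]
      exact (mod_invariance g (m i) (m i) dvd_rfl (ZMod.val x)).symm
  -- totient multiplicativity
  have htot : ((∏ i, m i).totient : ℂ) = ∏ i, ((m i).totient : ℂ) := by
    rw [totient_prod_coprime Finset.univ m (fun i _ j _ hij => hcop i j hij)]
    push_cast
    rfl
  rw [hS, htot]
  rw [Finset.prod_mul_distrib]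
  congr 1
  rw [Finset.prod_div_distrib, Finset.prod_const_one]
end

section
/- If F = (f₁,…,f_r) is a system of multiplicative arithmetical functions of one variable and G = (g₁,…,g_r) is any system of polynomials with integer coefficients, then the function of r variables R_F^{(G)}(m₁,…,m_r) := (1/φ(m)) · ∑_{1 ≤ k ≤ m, gcd(k,m)=1} f₁(gcd(g₁(k), m₁)) ⋯ f_r(gcd(g_r(k), m_r)), where m = lcm[m₁,…,m_r], is multiplicative: R_F^{(G)}(m₁n₁,…,m_r n_r) = R_F^{(G)}(m₁,…,m_r) · R_F^{(G)}(n₁,…,n_r) whenever gcd(m₁⋯m_r, n₁⋯n_r) = 1. -/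
open Finset

/-- `RF f g m = (1/φ(lcm[m₁,…,m_r])) ∑_{1 ≤ k ≤ lcm, gcd(k,lcm)=1} ∏ᵢ fᵢ(gcd(gᵢ(k), mᵢ))`. -/
noncomputable def RF {r : ℕ} (f : Fin r → ℕ → ℂ) (g : Fin r → Polynomial ℤ)
    (m : Fin r → ℕ) : ℂ :=
  (1 / (Nat.totient (Finset.univ.lcm m) : ℂ)) *
    ∑ k ∈ (Finset.Icc 1 (Finset.univ.lcm m)).filter
        (fun k => Nat.gcd k (Finset.univ.lcm m) = 1),
      ∏ i, f i (Int.gcd ((g i).eval (k : ℤ)) (m i))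

private lemma gcd_congr' (a b : ℤ) (d : ℕ) (h : a ≡ b [ZMOD d]) :
    Int.gcd a d = Int.gcd b d := by
  have key : ∀ x y : ℤ, (d:ℤ) ∣ x - y → Int.gcd x d ∣ Int.gcd y d := by
    intro x y hxy
    have h1 : (Int.gcd x d : ℤ) ∣ y := by
      have h2 : (Int.gcd x d : ℤ) ∣ x - y := dvd_trans (Int.gcd_dvd_right _ _) hxy
      have hx : (Int.gcd x d : ℤ) ∣ x := Int.gcd_dvd_left _ _
      have := dvd_sub hx h2
      simpa using this
    exact Int.natCast_dvd_natCast.mp (Int.dvd_coe_gcd h1 (Int.gcd_dvd_right _ _))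
  exact Nat.dvd_antisymm (key a b (Int.ModEq.dvd h.symm)) (key b a (Int.ModEq.dvd h))

private lemma eval_congr' (p : Polynomial ℤ) (a b : ℤ) (d : ℕ) (h : a ≡ b [ZMOD d]) :
    p.eval a ≡ p.eval b [ZMOD d] := by
  have h' : ((a : ZMod d)) = (b : ZMod d) := (ZMod.intCast_eq_intCast_iff _ _ _).mpr h
  rw [← ZMod.intCast_eq_intCast_iff]
  have e : ∀ x : ℤ, ((p.eval x : ℤ) : ZMod d) =
      Polynomial.eval₂ (Int.castRingHom (ZMod d)) (x : ZMod d) p := by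
    intro x
    show (Int.castRingHom (ZMod d)) (Polynomial.eval x p) = _
    rw [Polynomial.eval, Polynomial.hom_eval₂]
    simp
  rw [e, e, h']

private lemma summand_congr' (p : Polynomial ℤ) {d M : ℕ} (hd : d ∣ M) {a b : ℕ}
    (hab : a ≡ b [MOD M]) :
    Int.gcd (p.eval (a : ℤ)) d = Int.gcd (p.eval (b : ℤ)) d := by
  have h1 : (a : ℤ) ≡ b [ZMOD d] :=
    (Int.natCast_modEq_iff.mpr hab).of_dvd (Int.natCast_dvd_natCast.mpr hd)
  exact gcd_congr' _ _ _ (eval_congr' p a b d h1)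

private lemma nat_gcd_split {k m n : ℕ} (h : Nat.Coprime m n) :
    Nat.gcd k (m * n) = Nat.gcd k m * Nat.gcd k n := by
  apply Nat.dvd_antisymm
  · set x := Nat.gcd k (m * n) with hx
    have hxk : x ∣ k := Nat.gcd_dvd_left _ _
    have hxmn : x ∣ m * n := Nat.gcd_dvd_right _ _
    have hsplit := (Nat.gcd_mul_gcd_eq_iff_dvd_mul_of_coprime h (x := x)).mpr hxmn
    calc x = Nat.gcd x m * Nat.gcd x n := hsplit.symm
      _ ∣ Nat.gcd k m * Nat.gcd k n :=
        Nat.mul_dvd_mul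
          (Nat.dvd_gcd ((Nat.gcd_dvd_left x m).trans hxk) (Nat.gcd_dvd_right x m))
          (Nat.dvd_gcd ((Nat.gcd_dvd_left x n).trans hxk) (Nat.gcd_dvd_right x n))
  · have hcop : Nat.Coprime (Nat.gcd k m) (Nat.gcd k n) :=
      Nat.Coprime.coprime_dvd_right (Nat.gcd_dvd_right _ _)
        (Nat.Coprime.coprime_dvd_left (Nat.gcd_dvd_right _ _) h)
    exact Nat.dvd_gcd (hcop.mul_dvd_of_dvd_of_dvd (Nat.gcd_dvd_left _ _) (Nat.gcd_dvd_left _ _))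
      (Nat.mul_dvd_mul (Nat.gcd_dvd_right _ _) (Nat.gcd_dvd_right _ _))

private lemma int_gcd_split (a : ℤ) {m n : ℕ} (h : Nat.Coprime m n) :
    Int.gcd a ((m * n : ℕ) : ℤ) = Int.gcd a (m : ℤ) * Int.gcd a (n : ℤ) := by
  simp only [Int.gcd, Int.natAbs_natCast]
  exact nat_gcd_split h

private lemma int_gcd_dvd_nat (a : ℤ) (x : ℕ) : Int.gcd a (x : ℤ) ∣ x := by
  have := Int.gcd_dvd_right (a := a) (b := (x : ℤ))
  exact_mod_cast this

private lemma sum_units_eq {M : ℕ} [NeZero M] (H : ZMod M → ℂ) :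
    ∑ k ∈ (Finset.Icc 1 M).filter (fun k => Nat.gcd k M = 1), H (k : ZMod M)
      = ∑ u : (ZMod M)ˣ, H (u : ZMod M) := by
  rcases eq_or_ne M 1 with hM1 | hM1
  · subst hM1
    have h1 : ∀ x : ZMod 1, H x = H 0 := fun x => congrArg H (Subsingleton.elim _ _)
    have hcard : Fintype.card (ZMod 1)ˣ = 1 := by
      rw [ZMod.card_units_eq_totient]; rfl
    simp [h1, Finset.sum_const, Finset.card_univ, hcard]
  · have hM2 : 1 < M := lt_of_le_of_ne (Nat.one_le_iff_ne_zero.mpr (NeZero.ne M)) (Ne.symm hM1)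
    haveI : Fact (1 < M) := ⟨hM2⟩
    refine Finset.sum_bij'
      (fun k hk => ZMod.unitOfCoprime k (Finset.mem_filter.mp hk).2)
      (fun u _ => (u : ZMod M).val) (fun a ha => Finset.mem_univ _) ?_ ?_ ?_ ?_
    · intro u _
      rw [Finset.mem_filter, Finset.mem_Icc]
      refine ⟨⟨?_, le_of_lt (ZMod.val_lt _)⟩, ZMod.val_coe_unit_coprime u⟩
      rcases Nat.eq_zero_or_pos ((u : ZMod M).val) with h0 | h0
      · exact absurd ((ZMod.val_eq_zero _).mp h0) (Units.ne_zero u)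
      · exact h0
    · intro k hk
      obtain ⟨hIcc, hkg⟩ := Finset.mem_filter.mp hk
      obtain ⟨hk1, hkM⟩ := Finset.mem_Icc.mp hIcc
      have hklt : k < M := by
        rcases lt_or_eq_of_le hkM with h' | h'
        · exact h'
        · exfalso
          subst h'
          rw [Nat.gcd_self] at hkg
          exact hM1 hkg
      simp [ZMod.coe_unitOfCoprime, ZMod.val_natCast, Nat.mod_eq_of_lt hklt]
    · intro u _
      ext
      simp [ZMod.coe_unitOfCoprime, ZMod.natCast_val, ZMod.cast_id]
    · intro k hk
      exact congrArg H (ZMod.coe_unitOfCoprime k _).symm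

private lemma sum_units_eq' {M : ℕ} [NeZero M] (G : ℕ → ℂ)
    (hG : ∀ k : ℕ, G ((k : ZMod M)).val = G k) :
    ∑ k ∈ (Finset.Icc 1 M).filter (fun k => Nat.gcd k M = 1), G k
      = ∑ u : (ZMod M)ˣ, G ((u : ZMod M)).val := by
  have h := sum_units_eq (M := M) (fun x => G x.val)
  rw [← h]
  exact Finset.sum_congr rfl fun k _ => (hG k).symm

theorem stmt7 (r : ℕ) (f : Fin r → ℕ → ℂ) (g : Fin r → Polynomial ℤ)
    (hf0 : ∀ i, f i ≠ 0)
    (hf : ∀ i, ∀ a b : ℕ, Nat.Coprime a b → f i (a * b) = f i a * f i b)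
    (m n : Fin r → ℕ) (hm : ∀ i, 0 < m i) (hn : ∀ i, 0 < n i)
    (h : Nat.Coprime (∏ i, m i) (∏ i, n i)) :
    RF f g (fun i => m i * n i) = RF f g m * RF f g n := by
  classical
  set M := Finset.univ.lcm m with hM
  set N := Finset.univ.lcm n with hN
  have hMdvd : M ∣ ∏ i, m i := Finset.lcm_dvd fun i _ => Finset.dvd_prod_of_mem m (Finset.mem_univ i)
  have hNdvd : N ∣ ∏ i, n i := Finset.lcm_dvd fun i _ => Finset.dvd_prod_of_mem n (Finset.mem_univ i)
  have hMpos : 0 < M := by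
    rcases Nat.eq_zero_or_pos M with h0 | h0
    · exfalso
      have : (∏ i, m i) = 0 := by
        have := hMdvd; rw [h0] at this; exact zero_dvd_iff.mp this
      exact absurd this (Finset.prod_pos (fun i _ => hm i)).ne'
    · exact h0
  have hNpos : 0 < N := by
    rcases Nat.eq_zero_or_pos N with h0 | h0
    · exfalso
      have : (∏ i, n i) = 0 := by
        have := hNdvd; rw [h0] at this; exact zero_dvd_iff.mp this
      exact absurd this (Finset.prod_pos (fun i _ => hn i)).ne'
    · exact h0
  haveI : NeZero M := ⟨hMpos.ne'⟩
  haveI : NeZero N := ⟨hNpos.ne'⟩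
  haveI : NeZero (M * N) := ⟨(Nat.mul_pos hMpos hNpos).ne'⟩
  have copMN : Nat.Coprime M N := (h.coprime_dvd_left hMdvd).coprime_dvd_right hNdvd
  have copi : ∀ i, Nat.Coprime (m i) (n i) := fun i =>
    (h.coprime_dvd_left (Finset.dvd_prod_of_mem m (Finset.mem_univ i))).coprime_dvd_right
      (Finset.dvd_prod_of_mem n (Finset.mem_univ i))
  have hmdvdM : ∀ i, m i ∣ M := fun i => Finset.dvd_lcm (Finset.mem_univ i)
  have hndvdN : ∀ i, n i ∣ N := fun i => Finset.dvd_lcm (Finset.mem_univ i)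
  have hlcm : Finset.univ.lcm (fun i => m i * n i) = M * N := by
    apply Nat.dvd_antisymm
    · exact Finset.lcm_dvd fun i _ =>
        mul_dvd_mul (hmdvdM i) (hndvdN i)
    · refine copMN.mul_dvd_of_dvd_of_dvd ?_ ?_
      · exact Finset.lcm_dvd fun i _ =>
          (dvd_mul_right (m i) (n i)).trans (Finset.dvd_lcm (Finset.mem_univ i))
      · exact Finset.lcm_dvd fun i _ =>
          (dvd_mul_left (n i) (m i)).trans (Finset.dvd_lcm (Finset.mem_univ i))
  -- split the summand
  have split : ∀ k : ℕ,
      (∏ i, f i (Int.gcd ((g i).eval (k : ℤ)) ((m i * n i : ℕ) : ℤ))) =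
        (∏ i, f i (Int.gcd ((g i).eval (k : ℤ)) (m i))) *
          ∏ i, f i (Int.gcd ((g i).eval (k : ℤ)) (n i)) := by
    intro k
    rw [← Finset.prod_mul_distrib]
    refine Finset.prod_congr rfl fun i _ => ?_
    rw [int_gcd_split _ (copi i)]
    refine hf i _ _ ?_
    exact ((copi i).coprime_dvd_left (int_gcd_dvd_nat _ _)).coprime_dvd_right
      (int_gcd_dvd_nat _ _)
  -- congruence of summands
  have hcongr : ∀ (m' : Fin r → ℕ) (M' : ℕ), (∀ i, m' i ∣ M') → ∀ (a b : ℕ), a ≡ b [MOD M'] →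
      (∏ i, f i (Int.gcd ((g i).eval (a : ℤ)) (m' i))) =
        ∏ i, f i (Int.gcd ((g i).eval (b : ℤ)) (m' i)) := by
    intro m' M' hd a b hab
    refine Finset.prod_congr rfl fun i _ => ?_
    rw [summand_congr' (g i) (hd i) hab]
  have hval_mod : ∀ (M' : ℕ) [NeZero M'] (k : ℕ), ((k : ZMod M')).val ≡ k [MOD M'] := by
    intro M' _ k
    rw [ZMod.val_natCast]
    exact (Nat.mod_modEq k M')
  -- CRT equivalence
  let E : (ZMod (M * N))ˣ ≃ (ZMod M)ˣ × (ZMod N)ˣ :=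
    ((Units.mapEquiv (ZMod.chineseRemainder copMN).toMulEquiv).trans MulEquiv.prodUnits).toEquiv
  have hE1 : ∀ u : (ZMod (M * N))ˣ,
      (((E u).1 : ZMod M)) = (((u : ZMod (M * N)).val : ℕ) : ZMod M) := by
    intro u
    show ((ZMod.chineseRemainder copMN (u : ZMod (M * N))).1 : ZMod M) = _
    have h0 : (ZMod.chineseRemainder copMN) ((u : ZMod (M * N))) =
        ZMod.cast ((u : ZMod (M * N))) := rfl
    rw [h0, Prod.fst_zmod_cast, ZMod.natCast_val]
  have hE2 : ∀ u : (ZMod (M * N))ˣ,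
      (((E u).2 : ZMod N)) = (((u : ZMod (M * N)).val : ℕ) : ZMod N) := by
    intro u
    show ((ZMod.chineseRemainder copMN (u : ZMod (M * N))).2 : ZMod N) = _
    have h0 : (ZMod.chineseRemainder copMN) ((u : ZMod (M * N))) =
        ZMod.cast ((u : ZMod (M * N))) := rfl
    rw [h0, Prod.snd_zmod_cast, ZMod.natCast_val]
  -- main sum computation
  have main : (∑ k ∈ (Finset.Icc 1 (M * N)).filter (fun k => Nat.gcd k (M * N) = 1),
        ∏ i, f i (Int.gcd ((g i).eval (k : ℤ)) (m i * n i)))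
      = (∑ k ∈ (Finset.Icc 1 M).filter (fun k => Nat.gcd k M = 1),
          ∏ i, f i (Int.gcd ((g i).eval (k : ℤ)) (m i))) *
        ∑ k ∈ (Finset.Icc 1 N).filter (fun k => Nat.gcd k N = 1),
          ∏ i, f i (Int.gcd ((g i).eval (k : ℤ)) (n i)) := by
    have hdvdMN : ∀ i, m i * n i ∣ M * N := fun i => mul_dvd_mul (hmdvdM i) (hndvdN i)
    have step1 : (∑ k ∈ (Finset.Icc 1 (M * N)).filter (fun k => Nat.gcd k (M * N) = 1),
          ∏ i, f i (Int.gcd ((g i).eval (k : ℤ)) (m i * n i)))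
        = ∑ u : (ZMod (M * N))ˣ,
            ∏ i, f i (Int.gcd ((g i).eval ((((u : ZMod (M * N))).val : ℕ) : ℤ)) (m i * n i)) :=
      sum_units_eq' _ (fun k => hcongr (fun i => m i * n i) (M * N) hdvdMN _ _ (hval_mod _ k))
    have step2 : (∑ k ∈ (Finset.Icc 1 M).filter (fun k => Nat.gcd k M = 1),
          ∏ i, f i (Int.gcd ((g i).eval (k : ℤ)) (m i)))
        = ∑ u : (ZMod M)ˣ,
            ∏ i, f i (Int.gcd ((g i).eval ((((u : ZMod M)).val : ℕ) : ℤ)) (m i)) :=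
      sum_units_eq' _ (fun k => hcongr m M hmdvdM _ _ (hval_mod _ k))
    have step3 : (∑ k ∈ (Finset.Icc 1 N).filter (fun k => Nat.gcd k N = 1),
          ∏ i, f i (Int.gcd ((g i).eval (k : ℤ)) (n i)))
        = ∑ u : (ZMod N)ˣ,
            ∏ i, f i (Int.gcd ((g i).eval ((((u : ZMod N)).val : ℕ) : ℤ)) (n i)) :=
      sum_units_eq' _ (fun k => hcongr n N hndvdN _ _ (hval_mod _ k))
    have hprod : (∑ u : (ZMod (M * N))ˣ,
          ∏ i, f i (Int.gcd ((g i).eval ((((u : ZMod (M * N))).val : ℕ) : ℤ)) (m i * n i)))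
        = ∑ p : (ZMod M)ˣ × (ZMod N)ˣ,
            (∏ i, f i (Int.gcd ((g i).eval ((((p.1 : ZMod M)).val : ℕ) : ℤ)) (m i))) *
              ∏ i, f i (Int.gcd ((g i).eval ((((p.2 : ZMod N)).val : ℕ) : ℤ)) (n i)) := by
      apply Fintype.sum_equiv E
      intro u
      have h1 : ((E u).1 : ZMod M).val ≡ (u : ZMod (M * N)).val [MOD M] := by
        rw [hE1 u, ZMod.val_natCast]
        exact Nat.mod_modEq _ _
      have h2 : ((E u).2 : ZMod N).val ≡ (u : ZMod (M * N)).val [MOD N] := by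
        rw [hE2 u, ZMod.val_natCast]
        exact Nat.mod_modEq _ _
      simp only [← Nat.cast_mul]
      rw [split ((u : ZMod (M * N)).val)]
      rw [hcongr m M hmdvdM _ _ h1.symm, hcongr n N hndvdN _ _ h2.symm]
    rw [step1, step2, step3, hprod, Fintype.sum_prod_type, Fintype.sum_mul_sum]
  -- finish
  unfold RF
  rw [← hM, ← hN, hlcm, Nat.totient_mul copMN]
  push_cast
  rw [main]
  ring
end

section
/- Let r ≥ 1, let G = (g₁,…,g_r) be a system of polynomials with integer coefficients, let t₁,…,t_r be nonnegative integers, let m₁,…,m_r ∈ ℕ, m := lcm[m₁,…,m_r], and let M ∈ ℕ with m ∣ M. Then (1/φ(M)) · ∑_{1 ≤ k ≤ M, gcd(k,M)=1} gcd(g₁(k), m₁)^{t₁} ⋯ gcd(g_r(k), m_r)^{t_r} = ∑_{d₁ ∣ m₁, …, d_r ∣ m_r} [φ_{t₁}(d₁) ⋯ φ_{t_r}(d_r) / φ(lcm[d₁,…,d_r])] · η_G(d₁,…,d_r). -/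
open Finset

/-- The Jordan-type function `φ_t = μ ∗ id_t`, i.e.
`φ_t(n) = ∑_{e ∣ n} μ(e) (n/e)^t = n^t ∏_{p ∣ n} (1 - 1/p^t)`. -/
noncomputable def jordanPhi (t : ℕ) (n : ℕ) : ℂ :=
  ∑ e ∈ n.divisors, (ArithmeticFunction.moebius e : ℂ) * ((n / e : ℕ) : ℂ) ^ t

lemma jordanPhi_eq (t n : ℕ) :
    jordanPhi t n = (((ArithmeticFunction.moebius : ArithmeticFunction ℤ) :
      ArithmeticFunction ℂ) * ((ArithmeticFunction.pow t : ArithmeticFunction ℕ) :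
      ArithmeticFunction ℂ)) n := by
  rw [ArithmeticFunction.mul_apply, Nat.sum_divisorsAntidiagonal
    (fun x y => ((ArithmeticFunction.moebius : ArithmeticFunction ℤ) : ArithmeticFunction ℂ) x *
      ((ArithmeticFunction.pow t : ArithmeticFunction ℕ) : ArithmeticFunction ℂ) y)]
  unfold jordanPhi
  apply Finset.sum_congr rfl
  intro e he
  obtain ⟨h1, h2⟩ := Nat.mem_divisors.mp he
  simp only [ArithmeticFunction.intCoe_apply, ArithmeticFunction.natCoe_apply,
    ArithmeticFunction.pow_apply]
  have hp2 : n / e ≠ 0 := Nat.ne_of_gt (Nat.div_pos (Nat.le_of_dvd (Nat.pos_of_ne_zero h2) h1)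
    (Nat.pos_of_dvd_of_pos h1 (Nat.pos_of_ne_zero h2)))
  rw [if_neg (by tauto)]
  push_cast
  ring

lemma sum_jordanPhi (t : ℕ) {N : ℕ} (hN : N ≠ 0) :
    ∑ d ∈ N.divisors, jordanPhi t d = (N : ℂ) ^ t := by
  simp_rw [jordanPhi_eq]
  rw [← ArithmeticFunction.coe_mul_zeta_apply, mul_right_comm,
    ArithmeticFunction.coe_moebius_mul_coe_zeta, one_mul]
  simp [ArithmeticFunction.pow_apply, hN]

lemma gcd_pow_eq_sum (t : ℕ) {n : ℕ} (hn : n ≠ 0) (a : ℤ) :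
    ((Int.gcd a n : ℕ) : ℂ) ^ t =
      ∑ d ∈ n.divisors, if (d : ℤ) ∣ a then jordanPhi t d else 0 := by
  have hg : Int.gcd a n ≠ 0 := by
    simp [Int.gcd_eq_zero_iff, hn]
  rw [← Finset.sum_filter, ← sum_jordanPhi t hg]
  congr 1
  have : n.divisors.filter (fun d : ℕ => (d:ℤ) ∣ a) = n.divisors.filter (· ∣ Int.gcd a n) := by
    apply Finset.filter_congr
    intro d hd
    obtain ⟨hdn, -⟩ := Nat.mem_divisors.mp hd
    constructor
    · intro hda
      rw [← Int.natCast_dvd_natCast]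
      exact_mod_cast Int.dvd_gcd hda (Int.natCast_dvd_natCast.mpr hdn)
    · intro h
      exact dvd_trans (Int.natCast_dvd_natCast.mpr h) (Int.gcd_dvd_left _ _)
  rw [this, Nat.divisors_filter_dvd_of_dvd hn (Int.natCast_dvd_natCast.mp (Int.gcd_dvd_right _ _))]

lemma fiber_card_mul {G H : Type*} [Group G] [Group H] [Fintype G] [Fintype H] [DecidableEq H]
    (f : G →* H) (hf : Function.Surjective f) (y : H) :
    (Finset.univ.filter (fun g => f g = y)).card * Fintype.card H = Fintype.card G := by
  have key : ∀ y1 y2 : H, (Finset.univ.filter (fun g => f g = y1)).card =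
      (Finset.univ.filter (fun g => f g = y2)).card := by
    intro y1 y2
    obtain ⟨g0, hg0⟩ := hf (y2 * y1⁻¹)
    apply Finset.card_nbij' (fun g => g0 * g) (fun g => g0⁻¹ * g)
    · intro a ha
      simp only [Finset.mem_coe, Finset.mem_filter, Finset.mem_univ, true_and] at ha ⊢
      rw [map_mul, hg0, ha, inv_mul_cancel_right]
    · intro a ha
      simp only [Finset.mem_coe, Finset.mem_filter, Finset.mem_univ, true_and] at ha ⊢
      rw [map_mul, map_inv, hg0, ha, mul_inv_rev, inv_inv, inv_mul_cancel_right]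
    · intro a _; simp
    · intro a _; simp
  have : Fintype.card G = ∑ y' : H, (Finset.univ.filter (fun g => f g = y')).card := by
    rw [← Finset.card_univ]
    exact Finset.card_eq_sum_card_fiberwise (fun x _ => Finset.mem_univ _)
  rw [this]
  rw [Finset.sum_congr rfl (fun y' _ => key y' y), Finset.sum_const, Finset.card_univ,
    smul_eq_mul, mul_comm]

lemma card_range_coprime_mod {M L : ℕ} (x : ℕ) (hM : M ≠ 0) (hL : L ∣ M)
    (hx : Nat.Coprime x L) :
    ((Finset.range M).filter (fun k => Nat.gcd k M = 1 ∧ k % L = x % L)).card * L.totient =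
      M.totient := by
  haveI : NeZero M := ⟨hM⟩
  have hL0 : L ≠ 0 := by rintro rfl; exact hM (Nat.eq_zero_of_zero_dvd hL)
  haveI : NeZero L := ⟨hL0⟩
  set f := ZMod.unitsMap hL with hf
  set xu : (ZMod L)ˣ := ZMod.unitOfCoprime x hx with hxu
  have key : ∀ u : (ZMod M)ˣ, f u = xu ↔ (u : ZMod M).val % L = x % L := by
    intro u
    rw [Units.ext_iff]
    have h1 : ((f u : (ZMod L)ˣ) : ZMod L) = (((u : ZMod M).val : ℕ) : ZMod L) := by
      have : ((u : ZMod M).val : ZMod M) = (u : ZMod M) := by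
        simp [ZMod.natCast_val, ZMod.cast_id]
      calc ((f u : (ZMod L)ˣ) : ZMod L) = ZMod.castHom hL (ZMod L) (u : ZMod M) := rfl
        _ = ZMod.castHom hL (ZMod L) (((u : ZMod M).val : ℕ) : ZMod M) := by rw [this]
        _ = (((u : ZMod M).val : ℕ) : ZMod L) := by rw [map_natCast]
    rw [h1, hxu, ZMod.coe_unitOfCoprime, ZMod.natCast_eq_natCast_iff]
    exact Iff.rfl
  rw [← ZMod.card_units_eq_totient M, ← ZMod.card_units_eq_totient L,
    ← fiber_card_mul f (ZMod.unitsMap_surjective hL) xu]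
  congr 1
  apply Finset.card_nbij' (fun k => if h : Nat.Coprime k M then ZMod.unitOfCoprime k h else 1)
    (fun u => (u : ZMod M).val)
  · intro k hk
    simp only [Finset.mem_coe, Finset.mem_filter, Finset.mem_range] at hk
    obtain ⟨hkM, hk1, hkmod⟩ := hk
    dsimp only
    rw [dif_pos hk1]
    simp only [Finset.mem_coe, Finset.mem_filter, Finset.mem_univ, true_and]
    rw [key]
    rw [ZMod.coe_unitOfCoprime, ZMod.val_natCast, Nat.mod_eq_of_lt hkM]
    exact hkmod
  · intro u hu
    simp only [Finset.mem_coe, Finset.mem_filter, Finset.mem_univ, true_and] at hu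
    simp only [Finset.mem_coe, Finset.mem_filter, Finset.mem_range]
    exact ⟨ZMod.val_lt _, ZMod.val_coe_unit_coprime u, (key u).mp hu⟩
  · intro k hk
    simp only [Finset.mem_coe, Finset.mem_filter, Finset.mem_range] at hk
    obtain ⟨hkM, hk1, -⟩ := hk
    dsimp only
    rw [dif_pos hk1, ZMod.coe_unitOfCoprime, ZMod.val_natCast, Nat.mod_eq_of_lt hkM]
  · intro u hu
    dsimp only
    rw [dif_pos (ZMod.val_coe_unit_coprime u)]
    ext
    rw [ZMod.coe_unitOfCoprime]
    simp [ZMod.natCast_val, ZMod.cast_id]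

lemma card_Icc_coprime_mod {M L : ℕ} (x : ℕ) (hM : 0 < M) (hL : L ∣ M)
    (hx : Nat.Coprime x L) :
    ((Finset.Icc 1 M).filter (fun k => Nat.gcd k M = 1 ∧ k % L = x % L)).card * L.totient =
      M.totient := by
  rw [← card_range_coprime_mod x hM.ne' hL hx]
  congr 1
  have hL0 : L ≠ 0 := by rintro rfl; exact hM.ne' (Nat.eq_zero_of_zero_dvd hL)
  apply Finset.card_nbij' (fun k => k % M) (fun j => if j = 0 then M else j)
  · intro k hk
    simp only [Finset.mem_coe, Finset.mem_filter, Finset.mem_Icc] at hk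
    obtain ⟨⟨hk1, hkM⟩, hg, hmod⟩ := hk
    simp only [Finset.mem_coe, Finset.mem_filter, Finset.mem_range]
    refine ⟨Nat.mod_lt _ hM, ?_, ?_⟩
    · rw [← Nat.gcd_rec, Nat.gcd_comm]; exact hg
    · rw [Nat.mod_mod_of_dvd k hL]; exact hmod
  · intro j hj
    simp only [Finset.mem_coe, Finset.mem_filter, Finset.mem_range] at hj
    obtain ⟨hjM, hg, hmod⟩ := hj
    by_cases h0 : j = 0
    · subst h0
      have hM1 : M = 1 := by simpa using hg
      simp only [if_pos rfl, Finset.mem_coe, Finset.mem_filter, Finset.mem_Icc]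
      have hL1 : L = 1 := Nat.eq_one_of_dvd_one (hM1 ▸ hL)
      subst hM1
      refine ⟨⟨le_refl 1, le_refl 1⟩, by norm_num, ?_⟩
      rw [hL1] at hmod ⊢
      simpa using hmod
    · dsimp only
      rw [if_neg h0]
      simp only [Finset.mem_coe, Finset.mem_filter, Finset.mem_Icc]
      exact ⟨⟨Nat.one_le_iff_ne_zero.mpr h0, hjM.le⟩, hg, hmod⟩
  · intro k hk
    simp only [Finset.mem_coe, Finset.mem_filter, Finset.mem_Icc] at hk
    obtain ⟨⟨hk1, hkM⟩, -, -⟩ := hk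
    by_cases h : k = M
    · subst h; simp
    · have hlt : k < M := lt_of_le_of_ne hkM h
      dsimp only
      rw [Nat.mod_eq_of_lt hlt, if_neg (by omega)]
  · intro j hj
    simp only [Finset.mem_coe, Finset.mem_filter, Finset.mem_range] at hj
    by_cases h0 : j = 0
    · subst h0; simp
    · dsimp only
      rw [if_neg h0, Nat.mod_eq_of_lt hj.1]

lemma gcd_mod_eq {k L d : ℕ} (h : d ∣ L) : Nat.gcd (k % L) d = Nat.gcd k d := by
  rw [Nat.gcd_comm, Nat.gcd_rec, Nat.mod_mod_of_dvd k h, ← Nat.gcd_rec, Nat.gcd_comm]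

lemma modEq_eval {n a b : ℤ} (p : Polynomial ℤ) (h : a ≡ b [ZMOD n]) :
    p.eval a ≡ p.eval b [ZMOD n] := by
  induction p using Polynomial.induction_on' with
  | add p q hp hq => simpa [Polynomial.eval_add] using hp.add hq
  | monomial i c => simpa [Polynomial.eval_monomial] using (h.pow i).mul_left c

lemma dvd_eval_iff {r : ℕ} (g : Fin r → Polynomial ℤ) (d : Fin r → ℕ) (i : Fin r)
    {k L : ℕ} (hL : d i ∣ L) :
    (d i : ℤ) ∣ (g i).eval ((k % L : ℕ) : ℤ) ↔ (d i : ℤ) ∣ (g i).eval (k : ℤ) := by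
  have h : ((k % L : ℕ) : ℤ) ≡ (k : ℤ) [ZMOD (d i)] :=
    (Int.natCast_modEq_iff.mpr ((Nat.mod_modEq k L).of_dvd hL))
  have h2 := modEq_eval (g i) h
  rw [← Int.modEq_zero_iff_dvd, ← Int.modEq_zero_iff_dvd]
  exact ⟨fun hd => h2.symm.trans hd, fun hd => h2.trans hd⟩

lemma count_eq {r : ℕ} (g : Fin r → Polynomial ℤ) (d : Fin r → ℕ) {M : ℕ} (hM : 0 < M)
    (hLM : Finset.univ.lcm d ∣ M) :
    ((Finset.Icc 1 M).filter
        (fun k => Nat.gcd k M = 1 ∧ ∀ i, (d i : ℤ) ∣ (g i).eval (k : ℤ))).card *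
      (Finset.univ.lcm d).totient = M.totient * etaG g d := by
  set L := Finset.univ.lcm d with hLdef
  have hdL : ∀ i, d i ∣ L := fun i => Finset.dvd_lcm (Finset.mem_univ i)
  have hL0 : L ≠ 0 := by
    intro h; rw [h] at hLM; exact hM.ne' (Nat.eq_zero_of_zero_dvd hLM)
  have hLpos : 0 < L := Nat.pos_of_ne_zero hL0
  set T := (Finset.range L).filter
    (fun x : ℕ => (∀ i, (d i : ℤ) ∣ (g i).eval (x : ℤ)) ∧ ∀ i, Nat.gcd x (d i) = 1) with hT
  have hmap : ∀ k ∈ (Finset.Icc 1 M).filter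
      (fun k => Nat.gcd k M = 1 ∧ ∀ i, (d i : ℤ) ∣ (g i).eval (k : ℤ)), k % L ∈ T := by
    intro k hk
    simp only [Finset.mem_filter, Finset.mem_Icc] at hk
    obtain ⟨-, hg1, hdvd⟩ := hk
    simp only [hT, Finset.mem_filter, Finset.mem_range]
    refine ⟨Nat.mod_lt _ hLpos, fun i => (dvd_eval_iff g d i (hdL i)).mpr (hdvd i), fun i => ?_⟩
    rw [gcd_mod_eq (hdL i)]
    exact Nat.Coprime.coprime_dvd_right (dvd_trans (hdL i) hLM) hg1
  rw [Finset.card_eq_sum_card_fiberwise hmap, Finset.sum_mul]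
  have hfib : ∀ x ∈ T,
      (((Finset.Icc 1 M).filter
        (fun k => Nat.gcd k M = 1 ∧ ∀ i, (d i : ℤ) ∣ (g i).eval (k : ℤ))).filter
          (fun k => k % L = x)).card * L.totient = M.totient := by
    intro x hx
    simp only [hT, Finset.mem_filter, Finset.mem_range] at hx
    obtain ⟨hxL, hxdvd, hxgcd⟩ := hx
    have hxmod : x % L = x := Nat.mod_eq_of_lt hxL
    have hcop : Nat.Coprime x L := by
      have h1 : Nat.Coprime x (∏ i, d i) :=
        Nat.coprime_fintype_prod_right_iff.mpr (fun i => hxgcd i)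
      exact Nat.Coprime.coprime_dvd_right
        (Finset.lcm_dvd (fun i _ => Finset.dvd_prod_of_mem d (Finset.mem_univ i))) h1
    rw [← card_Icc_coprime_mod x hM hLM hcop]
    congr 2
    ext k
    simp only [Finset.filter_filter, Finset.mem_filter, Finset.mem_Icc, hxmod]
    constructor
    · rintro ⟨hk, ⟨hg1, -⟩, hmod⟩
      exact ⟨hk, hg1, hmod⟩
    · rintro ⟨hk, hg1, hmod⟩
      exact ⟨hk, ⟨hg1, fun i => by
        rw [← dvd_eval_iff g d i (hdL i), hmod]; exact hxdvd i⟩, hmod⟩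
  rw [Finset.sum_congr rfl hfib, Finset.sum_const, smul_eq_mul, mul_comm]
  rfl

lemma prod_ite_zero_all {r : ℕ} (P : Fin r → Prop) [DecidablePred P] (a : Fin r → ℂ) :
    ∏ i, (if P i then a i else 0) = if (∀ i, P i) then ∏ i, a i else 0 := by
  by_cases h : ∀ i, P i
  · rw [if_pos h]
    exact Finset.prod_congr rfl (fun i _ => if_pos (h i))
  · rw [if_neg h]
    push_neg at h
    obtain ⟨i, hi⟩ := h
    exact Finset.prod_eq_zero (Finset.mem_univ i) (if_neg hi)

theorem stmt8 (r : ℕ) (hr : 1 ≤ r) (g : Fin r → Polynomial ℤ) (t : Fin r → ℕ)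
    (m : Fin r → ℕ) (hm : ∀ i, 0 < m i) (M : ℕ) (hM0 : 0 < M)
    (hM : (Finset.univ.lcm m) ∣ M) :
    (1 / (Nat.totient M : ℂ)) *
        ∑ k ∈ (Finset.Icc 1 M).filter (fun k => Nat.gcd k M = 1),
          ∏ i, ((Int.gcd ((g i).eval (k : ℤ)) (m i) : ℕ) : ℂ) ^ (t i) =
      ∑ d ∈ Fintype.piFinset (fun i => (m i).divisors),
        (∏ i, jordanPhi (t i) (d i)) / (Nat.totient (Finset.univ.lcm d) : ℂ) *
          (etaG g d : ℂ) := by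
  have hMt : (M.totient : ℂ) ≠ 0 := by
    exact_mod_cast (Nat.totient_pos.mpr hM0).ne'
  have step1 : ∀ k ∈ (Finset.Icc 1 M).filter (fun k => Nat.gcd k M = 1),
      ∏ i, ((Int.gcd ((g i).eval (k : ℤ)) (m i) : ℕ) : ℂ) ^ (t i) =
      ∑ d ∈ Fintype.piFinset (fun i => (m i).divisors),
        if (∀ i, (d i : ℤ) ∣ (g i).eval (k : ℤ)) then ∏ i, jordanPhi (t i) (d i) else 0 := by
    intro k _
    have : ∀ i : Fin r, ((Int.gcd ((g i).eval (k : ℤ)) (m i) : ℕ) : ℂ) ^ (t i) =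
        ∑ e ∈ (m i).divisors, if (e : ℤ) ∣ (g i).eval (k : ℤ) then jordanPhi (t i) e else 0 :=
      fun i => gcd_pow_eq_sum (t i) (hm i).ne' _
    rw [Finset.prod_congr rfl (fun i _ => this i), Finset.prod_univ_sum]
    exact Finset.sum_congr rfl (fun d _ =>
      prod_ite_zero_all (fun i => (d i : ℤ) ∣ (g i).eval (k : ℤ)) _)
  rw [Finset.sum_congr rfl step1, Finset.sum_comm, Finset.mul_sum]
  apply Finset.sum_congr rfl
  intro d hd
  have hdd : ∀ i, d i ∣ m i := by
    intro i
    have := (Fintype.mem_piFinset.mp hd) i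
    exact (Nat.mem_divisors.mp this).1
  have hLd : Finset.univ.lcm d ∣ M :=
    dvd_trans (Finset.lcm_dvd (fun i _ =>
      dvd_trans (hdd i) (Finset.dvd_lcm (Finset.mem_univ i)))) hM
  have hLd0 : Finset.univ.lcm d ≠ 0 := by
    intro h; rw [h] at hLd; exact hM0.ne' (Nat.eq_zero_of_zero_dvd hLd)
  have hLt : ((Finset.univ.lcm d).totient : ℂ) ≠ 0 := by
    exact_mod_cast (Nat.totient_pos.mpr (Nat.pos_of_ne_zero hLd0)).ne'
  have key := count_eq g d hM0 hLd
  -- inner sum = (∏ jordanPhi) * card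
  rw [← Finset.sum_filter, Finset.sum_const, Finset.filter_filter, nsmul_eq_mul]
  have keyC : (((Finset.Icc 1 M).filter
      (fun k => Nat.gcd k M = 1 ∧ ∀ i, (d i : ℤ) ∣ (g i).eval (k : ℤ))).card : ℂ) *
      ((Finset.univ.lcm d).totient : ℂ) = (M.totient : ℂ) * (etaG g d : ℂ) := by
    exact_mod_cast congrArg (Nat.cast : ℕ → ℂ) key
  field_simp
  ring_nf
  ring_nf at keyC
  linear_combination (∏ i, jordanPhi (t i) (d i)) * keyC
end

section
/- Let r ≥ 1, let G = (g₁,…,g_r) be a system of polynomials with integer coefficients, let m₁,…,m_r ∈ ℕ, m := lcm[m₁,…,m_r], and M ∈ ℕ with m ∣ M. Define R_r^{(G)}(m₁,…,m_r) := (1/φ(M)) · ∑_{1 ≤ k ≤ M, gcd(k,M)=1} gcd(g₁(k), m₁) ⋯ gcd(g_r(k), m_r). Then R_r^{(G)}(m₁,…,m_r) = ∑_{d₁ ∣ m₁, …, d_r ∣ m_r} [φ(d₁) ⋯ φ(d_r) / φ(lcm[d₁,…,d_r])] · η_G(d₁,…,d_r), and this value is a positive integer; equivalently, ∑_{1 ≤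 k ≤ M, gcd(k,M)=1} gcd(g₁(k), m₁) ⋯ gcd(g_r(k), m_r) is a positive integer multiple of φ(M). -/
open Finset

-- L1: totient of lcm divides product
lemma totient_gcd_mul_totient_lcm (a b : ℕ) :
    Nat.totient (Nat.gcd a b) * Nat.totient (Nat.lcm a b) = Nat.totient a * Nat.totient b := by
  rcases Nat.eq_zero_or_pos a with rfl | ha
  · simp
  rcases Nat.eq_zero_or_pos b with rfl | hb
  · simp
  have h1 := Nat.totient_gcd_mul_totient_mul a b
  have h2 := Nat.totient_gcd_mul_totient_mul (Nat.gcd a b) (Nat.lcm a b)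
  have hg : Nat.gcd (Nat.gcd a b) (Nat.lcm a b) = Nat.gcd a b :=
    Nat.gcd_eq_left ((Nat.gcd_dvd_left a b).trans (Nat.dvd_lcm_left a b))
  rw [hg, Nat.gcd_mul_lcm] at h2
  have hgpos : 0 < Nat.gcd a b := Nat.gcd_pos_of_pos_left _ ha
  -- h2 : φ(gcd) * φ(a*b) = φ(gcd) * φ(lcm) * gcd
  -- h1 : φ(gcd) * φ(a*b) = φ a * φ b * gcd
  have := h1.symm.trans h2
  -- φ a * φ b * gcd = φ gcd * φ lcm * gcd
  exact (Nat.eq_of_mul_eq_mul_right hgpos this).symm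

lemma totient_lcm_dvd (a b : ℕ) : Nat.totient (Nat.lcm a b) ∣ Nat.totient a * Nat.totient b :=
  ⟨Nat.totient (Nat.gcd a b), by rw [← totient_gcd_mul_totient_lcm a b]; ring⟩

lemma totient_finset_lcm_dvd {ι : Type*} [DecidableEq ι] (s : Finset ι) (d : ι → ℕ) :
    Nat.totient (s.lcm d) ∣ ∏ i ∈ s, Nat.totient (d i) := by
  induction s using Finset.induction with
  | empty => simp
  | insert a s h ih =>
    rw [Finset.lcm_insert, Finset.prod_insert h]
    calc Nat.totient (Nat.lcm (d a) (s.lcm d)) ∣ Nat.totient (d a) * Nat.totient (s.lcm d) :=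
          totient_lcm_dvd _ _
      _ ∣ Nat.totient (d a) * ∏ i ∈ s, Nat.totient (d i) := mul_dvd_mul_left _ ih


lemma gcd_eq_sum_totient_s9 (a : ℤ) (n : ℕ) (hn : 0 < n) :
    (Int.gcd a n : ℕ) = ∑ d ∈ n.divisors.filter (fun d : ℕ => (d : ℤ) ∣ a), Nat.totient d := by
  have hg0 : Int.gcd a n ≠ 0 := by
    intro h
    rw [Int.gcd_eq_zero_iff] at h
    exact (by exact_mod_cast hn.ne' : (n:ℤ) ≠ 0) h.2
  have hset : n.divisors.filter (fun d : ℕ => (d : ℤ) ∣ a) = (Int.gcd a n).divisors := by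
    ext d
    simp only [Finset.mem_filter, Nat.mem_divisors]
    constructor
    · rintro ⟨⟨hdn, hn0⟩, hda⟩
      refine ⟨?_, hg0⟩
      have : (d : ℤ) ∣ (Int.gcd a n : ℤ) := by exact_mod_cast Int.dvd_gcd hda (Int.natCast_dvd_natCast.mpr hdn)
      exact_mod_cast this
    · rintro ⟨hd, _⟩
      have hga : (Int.gcd a n : ℤ) ∣ a := Int.gcd_dvd_left _ _
      have hgn : Int.gcd a n ∣ n := by
        have : (Int.gcd a n : ℤ) ∣ (n : ℤ) := Int.gcd_dvd_right _ _
        exact_mod_cast this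
      exact ⟨⟨hd.trans hgn, hn.ne'⟩, (Int.natCast_dvd_natCast.mpr hd).trans hga⟩
  rw [hset, Nat.sum_totient]

-- L4: coprime to finset lcm
lemma coprime_finset_lcm {ι : Type*} (s : Finset ι) (d : ι → ℕ) (x : ℕ)
    (h : ∀ i ∈ s, Nat.Coprime x (d i)) : Nat.Coprime x (s.lcm d) := by
  classical
  induction s using Finset.induction with
  | empty => simp [Nat.coprime_one_right]
  | insert a s hns ih =>
    rw [Finset.lcm_insert]
    have h1 : Nat.Coprime x (d a) := h a (Finset.mem_insert_self a s)
    have h2 : Nat.Coprime x (s.lcm d) := ih (fun i hi => h i (Finset.mem_insert_of_mem hi))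
    exact Nat.Coprime.coprime_dvd_right (Nat.lcm_dvd_mul _ _) (Nat.Coprime.mul_right h1 h2)

-- polynomial congruence
lemma poly_dvd_congr (p : Polynomial ℤ) (d : ℕ) (a b : ℤ) (h : (d : ℤ) ∣ a - b) :
    ((d : ℤ) ∣ p.eval a ↔ (d : ℤ) ∣ p.eval b) := by
  have hd : (d : ℤ) ∣ p.eval a - p.eval b := h.trans (Polynomial.sub_dvd_eval_sub a b p)
  constructor
  · intro h1; have := dvd_sub h1 hd; simpa using this
  · intro h1; have := dvd_add h1 hd; simpa using this


lemma card_fiber_units (L M : ℕ) [NeZero M] (h : L ∣ M) (v : (ZMod L)ˣ) :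
    Nat.totient L * (Finset.univ.filter fun u : (ZMod M)ˣ => ZMod.unitsMap h u = v).card
      = Nat.totient M := by
  haveI : NeZero L := ⟨fun hL => (NeZero.ne M) (by subst hL; exact Nat.eq_zero_of_zero_dvd h)⟩
  have hsurj := ZMod.unitsMap_surjective h (m := M) (n := L)
  set f := ZMod.unitsMap h with hf
  -- all fibers have the same cardinality
  have hconst : ∀ w : (ZMod L)ˣ,
      (Finset.univ.filter fun u : (ZMod M)ˣ => f u = w).card
        = (Finset.univ.filter fun u : (ZMod M)ˣ => f u = v).card := by
    intro w
    obtain ⟨u₀, hu₀⟩ := hsurj w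
    obtain ⟨v₀, hv₀⟩ := hsurj v
    apply Finset.card_bij' (fun u _ => u * u₀⁻¹ * v₀) (fun u _ => u * v₀⁻¹ * u₀)
    · intro u hu
      simp only [Finset.mem_filter, Finset.mem_univ, true_and] at hu ⊢
      simp [map_mul, map_inv, hu, hu₀, hv₀]
    · intro u hu
      simp only [Finset.mem_filter, Finset.mem_univ, true_and] at hu ⊢
      simp [map_mul, map_inv, hu, hu₀, hv₀]
    · intro u hu; group
    · intro u hu; group
  have hcard : Fintype.card (ZMod M)ˣ =
      ∑ w : (ZMod L)ˣ, (Finset.univ.filter fun u : (ZMod M)ˣ => f u = w).card := by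
    rw [← Finset.card_univ]
    exact Finset.card_eq_sum_card_fiberwise (fun u _ => Finset.mem_univ (f u))
  rw [ZMod.card_units_eq_totient] at hcard
  have : Nat.totient M =
      Fintype.card (ZMod L)ˣ * (Finset.univ.filter fun u : (ZMod M)ˣ => f u = v).card := by
    rw [hcard, Finset.sum_congr rfl (fun w _ => hconst w), Finset.sum_const, smul_eq_mul,
      Finset.card_univ]
  rw [this, ZMod.card_units_eq_totient]

lemma card_residue (L M x : ℕ) (hLM : L ∣ M) (hM : 0 < M) (hx : x < L)
    (hxL : Nat.gcd x L = 1) :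
    Nat.totient L *
      ((Finset.range M).filter fun k => Nat.gcd k M = 1 ∧ k % L = x).card = Nat.totient M := by
  haveI : NeZero M := ⟨hM.ne'⟩
  have hL0 : 0 < L := hx.trans_le' (Nat.zero_le x) |>.trans_le (le_refl L) |>.trans_le (le_refl L)
  set v : (ZMod L)ˣ := ZMod.unitOfCoprime x hxL with hv
  rw [← card_fiber_units L M hLM v]
  congr 1
  apply Finset.card_bij (fun k hk => ZMod.unitOfCoprime k
    (by exact (Finset.mem_filter.mp hk).2.1))
  · intro k hk
    have hmem := Finset.mem_filter.mp hk
    have hk1 : Nat.gcd k M = 1 := hmem.2.1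
    have hk2 : k % L = x := hmem.2.2
    simp only [Finset.mem_filter, Finset.mem_univ, true_and]
    apply Units.ext
    have h1 : ((ZMod.unitsMap hLM (ZMod.unitOfCoprime k hk1)) : ZMod L)
        = (k : ZMod L) := by
      rw [ZMod.unitsMap_def, Units.coe_map]
      simp only [MonoidHom.coe_coe, ZMod.coe_unitOfCoprime, map_natCast]
    rw [h1, hv, ZMod.coe_unitOfCoprime, ZMod.natCast_eq_natCast_iff]
    show k ≡ x [MOD L]
    unfold Nat.ModEq
    rw [hk2, Nat.mod_eq_of_lt hx]
  · intro k1 hk1 k2 hk2 heq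
    have h1 := Finset.mem_range.mp (Finset.mem_filter.mp hk1).1
    have h2 := Finset.mem_range.mp (Finset.mem_filter.mp hk2).1
    have : (k1 : ZMod M) = (k2 : ZMod M) := by
      have := congrArg (fun u : (ZMod M)ˣ => (u : ZMod M)) heq
      simpa [ZMod.coe_unitOfCoprime] using this
    rw [ZMod.natCast_eq_natCast_iff] at this
    exact (Nat.ModEq.eq_of_lt_of_lt this h1 h2)
  · intro u hu
    have hu' := (Finset.mem_filter.mp hu).2
    refine ⟨(u : ZMod M).val, ?_, ?_⟩
    · apply Finset.mem_filter.mpr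
      refine ⟨Finset.mem_range.mpr (ZMod.val_lt _), ZMod.val_coe_unit_coprime u, ?_⟩
      -- val % L = x
      have hcast : (((u : ZMod M).val : ℕ) : ZMod L) = (x : ZMod L) := by
        have h1 : ZMod.unitsMap hLM u = v := hu'
        have h2 : ((ZMod.unitsMap hLM u : ZMod L)) = (x : ZMod L) := by
          rw [h1, hv, ZMod.coe_unitOfCoprime]
        rw [ZMod.unitsMap_def] at h2
        have h3 : (((u : ZMod M).val : ℕ) : ZMod M) = (u : ZMod M) :=
          ZMod.natCast_rightInverse (u : ZMod M)
        calc (((u : ZMod M).val : ℕ) : ZMod L)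
            = ZMod.castHom hLM (ZMod L) (((u : ZMod M).val : ℕ) : ZMod M) := by
              rw [map_natCast]
          _ = ZMod.castHom hLM (ZMod L) (u : ZMod M) := by rw [h3]
          _ = (x : ZMod L) := by simpa using h2
      rw [ZMod.natCast_eq_natCast_iff] at hcast
      have : (u : ZMod M).val % L = x % L := hcast
      rwa [Nat.mod_eq_of_lt hx] at this
    · apply Units.ext
      rw [ZMod.coe_unitOfCoprime]
      exact ZMod.natCast_rightInverse (u : ZMod M)


lemma sum_shift (M : ℕ) (hM0 : 0 < M) (f : ℕ → ℕ) (hf : f M = f 0) :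
    ∑ k ∈ (Finset.Icc 1 M).filter (fun k => Nat.gcd k M = 1), f k
      = ∑ k ∈ (Finset.range M).filter (fun k => Nat.gcd k M = 1), f k := by
  rcases eq_or_lt_of_le (Nat.succ_le_of_lt hM0) with h1 | h2
  · have hM1 : M = 1 := h1.symm
    subst hM1
    norm_num [Finset.Icc_self, Finset.filter_singleton, Finset.range_one, hf]
  · have hsets : (Finset.Icc 1 M).filter (fun k => Nat.gcd k M = 1)
        = (Finset.range M).filter (fun k => Nat.gcd k M = 1) := by
      ext k
      simp only [Finset.mem_filter, Finset.mem_Icc, Finset.mem_range]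
      constructor
      · rintro ⟨⟨h1k, hkM⟩, hg⟩
        refine ⟨lt_of_le_of_ne hkM ?_, hg⟩
        rintro rfl
        rw [Nat.gcd_self] at hg
        omega
      · rintro ⟨hkM, hg⟩
        refine ⟨⟨?_, hkM.le⟩, hg⟩
        rcases Nat.eq_zero_or_pos k with rfl | h
        · rw [Nat.gcd_zero_left] at hg; omega
        · exact h
    rw [hsets]

lemma key_count (r : ℕ) (g : Fin r → Polynomial ℤ) (m : Fin r → ℕ) (hm : ∀ i, 0 < m i)
    (M : ℕ) (hM0 : 0 < M) (hM : (Finset.univ.lcm m) ∣ M) (d : Fin r → ℕ)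
    (hd : ∀ i, d i ∈ (m i).divisors) :
    Nat.totient (Finset.univ.lcm d) *
      ((Finset.range M).filter
        (fun k => Nat.gcd k M = 1 ∧ ∀ i, (d i : ℤ) ∣ (g i).eval (k : ℤ))).card
      = Nat.totient M * etaG g d := by
  set L := Finset.univ.lcm d with hL
  have hdm : ∀ i, d i ∣ m i := fun i => (Nat.mem_divisors.mp (hd i)).1
  have hLM : L ∣ M := Finset.lcm_dvd fun i _ =>
    (hdm i).trans ((Finset.dvd_lcm (Finset.mem_univ i)).trans hM)
  have hdL : ∀ i, d i ∣ L := fun i => Finset.dvd_lcm (Finset.mem_univ i)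
  have hdMv : ∀ i, d i ∣ M := fun i => (hdL i).trans hLM
  have hL0 : 0 < L := Nat.pos_of_dvd_of_pos hLM hM0
  set A := (Finset.range M).filter
    (fun k => Nat.gcd k M = 1 ∧ ∀ i, (d i : ℤ) ∣ (g i).eval (k : ℤ)) with hA
  have hfib : A.card = ∑ x ∈ Finset.range L, (A.filter (fun k => k % L = x)).card :=
    Finset.card_eq_sum_card_fiberwise fun k _ => Finset.mem_range.mpr (Nat.mod_lt _ hL0)
  have htrans : ∀ (i : Fin r) (k : ℕ),
      ((d i : ℤ) ∣ (g i).eval (k : ℤ) ↔ (d i : ℤ) ∣ (g i).eval ((k % L : ℕ) : ℤ)) := by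
    intro i k
    apply poly_dvd_congr
    have hle : k % L ≤ k := Nat.mod_le k L
    have h3 : k - k % L = L * (k / L) := by
      have := Nat.div_add_mod k L; omega
    have h2 : (k : ℤ) - ((k % L : ℕ) : ℤ) = (L : ℤ) * ((k / L : ℕ) : ℤ) := by
      rw [← Nat.cast_sub hle, h3]; push_cast; ring
    rw [h2]
    exact Dvd.dvd.mul_right (Int.natCast_dvd_natCast.mpr (hdL i)) _
  have hgcd_mod : ∀ (i : Fin r) (k : ℕ), Nat.gcd (k % L) (d i) = Nat.gcd k (d i) := by
    intro i k
    have hmm : (k % L) % d i = k % d i := Nat.mod_mod_of_dvd k (hdL i)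
    rw [Nat.gcd_comm, Nat.gcd_rec, hmm, ← Nat.gcd_rec, Nat.gcd_comm]
  have hstep : ∀ x ∈ Finset.range L,
      Nat.totient L * (A.filter (fun k => k % L = x)).card
        = Nat.totient M * (if ((∀ i, (d i : ℤ) ∣ (g i).eval (x : ℤ)) ∧
            ∀ i, Nat.gcd x (d i) = 1) then 1 else 0) := by
    intro x hx
    have hxL := Finset.mem_range.mp hx
    by_cases hC : (∀ i, (d i : ℤ) ∣ (g i).eval (x : ℤ)) ∧ ∀ i, Nat.gcd x (d i) = 1
    · rw [if_pos hC, mul_one]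
      have hxcop : Nat.gcd x L = 1 := coprime_finset_lcm _ _ _ (fun i _ => hC.2 i)
      have hsets : A.filter (fun k => k % L = x)
          = (Finset.range M).filter (fun k => Nat.gcd k M = 1 ∧ k % L = x) := by
        rw [hA, Finset.filter_filter]
        ext k
        simp only [Finset.mem_filter, Finset.mem_range]
        constructor
        · rintro ⟨hk, ⟨h1, _⟩, h2⟩; exact ⟨hk, h1, h2⟩
        · rintro ⟨hk, h1, h2⟩
          refine ⟨hk, ⟨h1, fun i => ?_⟩, h2⟩
          rw [htrans i k, h2]
          exact hC.1 i
      rw [hsets]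
      exact card_residue L M x hLM hM0 hxL hxcop
    · rw [if_neg hC, mul_zero]
      have hempty : A.filter (fun k => k % L = x) = ∅ := by
        rw [Finset.eq_empty_iff_forall_notMem]
        intro k hk
        rw [hA, Finset.filter_filter, Finset.mem_filter] at hk
        obtain ⟨_, ⟨h1, h3⟩, h2⟩ := hk
        apply hC
        constructor
        · intro i
          have := (htrans i k).mp (h3 i)
          rwa [h2] at this
        · intro i
          have hkd : Nat.gcd k (d i) = 1 :=
            Nat.Coprime.coprime_dvd_right (hdMv i) h1
          rw [← h2, hgcd_mod i k]
          exact hkd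
      rw [hempty]
      simp
  calc Nat.totient L * A.card
      = ∑ x ∈ Finset.range L, Nat.totient L * (A.filter (fun k => k % L = x)).card := by
        rw [hfib, Finset.mul_sum]
    _ = ∑ x ∈ Finset.range L, Nat.totient M * (if ((∀ i, (d i : ℤ) ∣ (g i).eval (x : ℤ)) ∧
            ∀ i, Nat.gcd x (d i) = 1) then 1 else 0) := Finset.sum_congr rfl hstep
    _ = Nat.totient M * ∑ x ∈ Finset.range L, (if ((∀ i, (d i : ℤ) ∣ (g i).eval (x : ℤ)) ∧
            ∀ i, Nat.gcd x (d i) = 1) then 1 else 0) := by rw [Finset.mul_sum]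
    _ = Nat.totient M * etaG g d := by
        rw [etaG, Finset.card_filter]

theorem stmt9 (r : ℕ) (hr : 1 ≤ r) (g : Fin r → Polynomial ℤ)
    (m : Fin r → ℕ) (hm : ∀ i, 0 < m i) (M : ℕ) (hM0 : 0 < M)
    (hM : (Finset.univ.lcm m) ∣ M) :
    ((1 / (Nat.totient M : ℚ)) *
        ∑ k ∈ (Finset.Icc 1 M).filter (fun k => Nat.gcd k M = 1),
          ((∏ i, Int.gcd ((g i).eval (k : ℤ)) (m i) : ℕ) : ℚ) =
      ∑ d ∈ Fintype.piFinset (fun i => (m i).divisors),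
        (∏ i, (Nat.totient (d i) : ℚ)) / (Nat.totient (Finset.univ.lcm d) : ℚ) *
          (etaG g d : ℚ)) ∧
    (∃ c : ℕ, 0 < c ∧
      ∑ k ∈ (Finset.Icc 1 M).filter (fun k => Nat.gcd k M = 1),
          ∏ i, Int.gcd ((g i).eval (k : ℤ)) (m i) = Nat.totient M * c) := by
  have hmM : ∀ i, m i ∣ M := fun i => (Finset.dvd_lcm (Finset.mem_univ i)).trans hM
  have hphiM : 0 < Nat.totient M := Nat.totient_pos.mpr hM0
  set D := Fintype.piFinset (fun i => (m i).divisors) with hD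
  set F : ℕ → ℕ := fun k => ∏ i, Int.gcd ((g i).eval (k : ℤ)) (m i) with hF
  -- shift hypothesis
  have hshift : F M = F 0 := by
    apply Finset.prod_congr rfl
    intro i _
    have h1 := gcd_eq_sum_totient_s9 ((g i).eval ((M : ℕ) : ℤ)) (m i) (hm i)
    have h2 := gcd_eq_sum_totient_s9 ((g i).eval ((0 : ℕ) : ℤ)) (m i) (hm i)
    rw [h1, h2]
    apply Finset.sum_congr _ (fun _ _ => rfl)
    apply Finset.filter_congr
    intro e he
    have hedvd : (e : ℤ) ∣ ((M : ℕ) : ℤ) - ((0 : ℕ) : ℤ) := by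
      have : e ∣ M := (Nat.mem_divisors.mp he).1.trans (hmM i)
      push_cast
      simpa using Int.natCast_dvd_natCast.mpr this
    exact poly_dvd_congr (g i) e _ _ hedvd
  -- expansion of F k
  have hexp : ∀ k : ℕ, F k
      = ∑ d ∈ D.filter (fun d => ∀ i, (d i : ℤ) ∣ (g i).eval (k : ℤ)),
          ∏ i, Nat.totient (d i) := by
    intro k
    calc F k = ∏ i, ∑ e ∈ (m i).divisors.filter (fun e : ℕ => (e : ℤ) ∣ (g i).eval (k : ℤ)),
          Nat.totient e :=
        Finset.prod_congr rfl fun i _ => gcd_eq_sum_totient_s9 _ _ (hm i)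
      _ = ∑ d ∈ Fintype.piFinset
            (fun i => (m i).divisors.filter (fun e : ℕ => (e : ℤ) ∣ (g i).eval (k : ℤ))),
            ∏ i, Nat.totient (d i) := Finset.prod_univ_sum _ _
      _ = ∑ d ∈ D.filter (fun d => ∀ i, (d i : ℤ) ∣ (g i).eval (k : ℤ)),
            ∏ i, Nat.totient (d i) := by
          apply Finset.sum_congr _ (fun _ _ => rfl)
          ext e
          simp only [hD, Fintype.mem_piFinset, Finset.mem_filter, forall_and]
  -- the swapped sum
  set N : (Fin r → ℕ) → ℕ := fun d =>
    ((Finset.range M).filter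
      (fun k => Nat.gcd k M = 1 ∧ ∀ i, (d i : ℤ) ∣ (g i).eval (k : ℤ))).card with hN
  have hswap : ∑ k ∈ (Finset.range M).filter (fun k => Nat.gcd k M = 1), F k
      = ∑ d ∈ D, (∏ i, Nat.totient (d i)) * N d := by
    calc ∑ k ∈ (Finset.range M).filter (fun k => Nat.gcd k M = 1), F k
        = ∑ k ∈ (Finset.range M).filter (fun k => Nat.gcd k M = 1), ∑ d ∈ D,
            if (∀ i, (d i : ℤ) ∣ (g i).eval (k : ℤ)) then ∏ i, Nat.totient (d i) else 0 := by
          apply Finset.sum_congr rfl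
          intro k _
          rw [hexp k, Finset.sum_filter]
      _ = ∑ d ∈ D, ∑ k ∈ (Finset.range M).filter (fun k => Nat.gcd k M = 1),
            if (∀ i, (d i : ℤ) ∣ (g i).eval (k : ℤ)) then ∏ i, Nat.totient (d i) else 0 :=
          Finset.sum_comm
      _ = ∑ d ∈ D, (∏ i, Nat.totient (d i)) * N d := by
          apply Finset.sum_congr rfl
          intro d _
          rw [← Finset.sum_filter, Finset.filter_filter, Finset.sum_const, smul_eq_mul, hN,
            mul_comm]
  -- integrality
  set q : (Fin r → ℕ) → ℕ := fun d => (∏ i, Nat.totient (d i)) / Nat.totient (Finset.univ.lcm d)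
    with hq
  have hqd : ∀ d : Fin r → ℕ, Nat.totient (Finset.univ.lcm d) * q d = ∏ i, Nat.totient (d i) :=
    fun d => Nat.mul_div_cancel' (totient_finset_lcm_dvd _ _)
  set c : ℕ := ∑ d ∈ D, q d * etaG g d with hc
  have hterm : ∀ d ∈ D, (∏ i, Nat.totient (d i)) * N d = Nat.totient M * (q d * etaG g d) := by
    intro d hdD
    have hd : ∀ i, d i ∈ (m i).divisors := by
      rw [hD, Fintype.mem_piFinset] at hdD; exact hdD
    calc (∏ i, Nat.totient (d i)) * N d
        = q d * (Nat.totient (Finset.univ.lcm d) * N d) := by rw [← hqd d]; ring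
      _ = q d * (Nat.totient M * etaG g d) := by
          rw [key_count r g m hm M hM0 hM d hd]
      _ = Nat.totient M * (q d * etaG g d) := by ring
  have hS : ∑ k ∈ (Finset.range M).filter (fun k => Nat.gcd k M = 1), F k
      = Nat.totient M * c := by
    rw [hswap, Finset.sum_congr rfl hterm, ← Finset.mul_sum, hc]
  have hIcc : ∑ k ∈ (Finset.Icc 1 M).filter (fun k => Nat.gcd k M = 1), F k
      = Nat.totient M * c := by
    rw [sum_shift M hM0 F hshift, hS]
  -- positivity
  have hA0card : ((Finset.range M).filter (fun k => Nat.gcd k M = 1)).card = Nat.totient M := by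
    rw [Nat.totient_eq_card_coprime]
    congr 1
    ext k
    simp [Nat.Coprime, Nat.gcd_comm]
  have hSpos : 0 < ∑ k ∈ (Finset.range M).filter (fun k => Nat.gcd k M = 1), F k := by
    apply Finset.sum_pos
    · intro k _
      apply Finset.prod_pos
      intro i _
      rw [Int.gcd_pos_iff]
      right
      exact_mod_cast (hm i).ne'
    · rw [← Finset.card_pos, hA0card]
      exact hphiM
  have hcpos : 0 < c := by
    have h2 : 0 < Nat.totient M * c := by rw [← hS]; exact hSpos
    rcases Nat.eq_zero_or_pos c with h | h
    · rw [h, mul_zero] at h2; exact absurd h2 (lt_irrefl 0)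
    · exact h
  constructor
  · -- rational identity
    have hcast : (∑ k ∈ (Finset.Icc 1 M).filter (fun k => Nat.gcd k M = 1),
        ((∏ i, Int.gcd ((g i).eval (k : ℤ)) (m i) : ℕ) : ℚ))
        = ((Nat.totient M * c : ℕ) : ℚ) := by
      exact_mod_cast hIcc
    have hφ : ((Nat.totient M : ℚ)) ≠ 0 := by
      exact_mod_cast hphiM.ne'
    rw [hcast, Nat.cast_mul, one_div, inv_mul_cancel_left₀ hφ, hc]
    push_cast
    apply Finset.sum_congr rfl
    intro d hdD
    have hd : ∀ i, d i ∣ m i := fun i =>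
      (Nat.mem_divisors.mp ((Fintype.mem_piFinset.mp (by rwa [hD] at hdD)) i)).1
    have hLM2 : Finset.univ.lcm d ∣ M := Finset.lcm_dvd fun i _ =>
      (hd i).trans ((Finset.dvd_lcm (Finset.mem_univ i)).trans hM)
    have hφL : ((Nat.totient (Finset.univ.lcm d) : ℚ)) ≠ 0 := by
      exact_mod_cast (Nat.totient_pos.mpr (Nat.pos_of_dvd_of_pos hLM2 hM0)).ne'
    have h1 : (∏ i, ((Nat.totient (d i) : ℚ)))
        = ((Nat.totient (Finset.univ.lcm d) : ℚ)) * (q d : ℚ) := by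
      rw [← Nat.cast_prod, ← hqd d, Nat.cast_mul]
    rw [h1]
    field_simp
  · exact ⟨c, hcpos, hIcc⟩
end

section
/- Let r ≥ 1, let a₁,…,a_r ∈ ℤ, let m₁,…,m_r ∈ ℕ, m := lcm[m₁,…,m_r], and M ∈ ℕ with m ∣ M. Then (1/φ(M)) · ∑_{1 ≤ k ≤ M, gcd(k,M)=1} gcd(k − a₁, m₁) ⋯ gcd(k − a_r, m_r) = ∑_{d₁ ∣ m₁, …, d_r ∣ m_r} [φ(d₁) ⋯ φ(d_r) / φ(lcm[d₁,…,d_r])] · η^{(a)}(d₁,…,d_r), where η^{(a)}(d₁,…,d_r) = 1 if gcd(d_i, a_i) = 1 for 1 ≤ i ≤ r and gcd(d_i, d_j) ∣ a_i − a_j for 1 ≤ i, j ≤ r, and η^{(a)}(d₁,…,d_r) = 0 otherwise. In particular the left-hand side does not depend on M. -/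
open Finset


lemma L1 (n : ℤ) (m : ℕ) (hm : m ≠ 0) :
    (Int.gcd n m : ℕ) = ∑ d ∈ m.divisors, if (d:ℤ) ∣ n then Nat.totient d else 0 := by
  rw [← Finset.sum_filter]
  have h1 : m.divisors.filter (fun d : ℕ => ((d:ℤ) ∣ n)) = (Int.gcd n m).divisors := by
    ext d
    simp only [Finset.mem_filter, Nat.mem_divisors]
    constructor
    · rintro ⟨⟨hdm, _⟩, hdn⟩
      refine ⟨?_, ?_⟩
      · rw [← Int.natCast_dvd_natCast]
        exact Int.dvd_coe_gcd hdn (Int.natCast_dvd_natCast.mpr hdm)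
      · simp [Int.gcd_eq_zero_iff, hm]
    · rintro ⟨hd, hg⟩
      have h2 : (d:ℤ) ∣ Int.gcd n m := Int.natCast_dvd_natCast.mpr hd
      exact ⟨⟨Nat.dvd_trans hd (by simpa [Int.gcd] using Nat.gcd_dvd_right n.natAbs m), hm⟩, h2.trans (Int.gcd_dvd_left _ _)⟩
  rw [h1, Nat.sum_totient]

lemma L3 {x y z : ℕ} (hx : x ≠ 0) (hy : y ≠ 0) (hz : z ≠ 0) :
    Nat.gcd (Nat.lcm x y) z ∣ Nat.lcm (Nat.gcd x z) (Nat.gcd y z) := by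
  have hlcm : Nat.lcm x y ≠ 0 := Nat.lcm_ne_zero hx hy
  have hA : Nat.gcd (Nat.lcm x y) z ≠ 0 := Nat.gcd_ne_zero_left hlcm
  have hgx : Nat.gcd x z ≠ 0 := Nat.gcd_ne_zero_left hx
  have hgy : Nat.gcd y z ≠ 0 := Nat.gcd_ne_zero_left hy
  have hB : Nat.lcm (Nat.gcd x z) (Nat.gcd y z) ≠ 0 := Nat.lcm_ne_zero hgx hgy
  rw [← Nat.factorization_le_iff_dvd hA hB]
  rw [Nat.factorization_gcd hlcm hz, Nat.factorization_lcm hx hy,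
    Nat.factorization_lcm hgx hgy, Nat.factorization_gcd hx hz, Nat.factorization_gcd hy hz]
  intro p
  simp only [Finsupp.inf_apply, Finsupp.sup_apply]
  exact le_of_eq (inf_sup_right _ _ _)

lemma lcm_ne_zero' {ι : Type*} [DecidableEq ι] (s : Finset ι) (d : ι → ℕ) (hd : ∀ i ∈ s, d i ≠ 0) :
    s.lcm d ≠ 0 := by
  induction s using Finset.induction_on with
  | empty => simp
  | @insert i s hi ih =>
    rw [Finset.lcm_insert]
    exact Nat.lcm_ne_zero (hd i (by simp)) (ih fun j hj => hd j (by simp [hj]))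

lemma L3' {ι : Type*} [DecidableEq ι] (d : ι → ℕ) (z w : ℕ) (hz : z ≠ 0)
    (s : Finset ι) (hd : ∀ i ∈ s, d i ≠ 0) (h : ∀ i ∈ s, Nat.gcd (d i) z ∣ w) :
    Nat.gcd (s.lcm d) z ∣ w := by
  induction s using Finset.induction_on with
  | empty => simpa using Nat.one_dvd w
  | @insert i s hi ih =>
    rw [Finset.lcm_insert]
    have h1 := L3 (x := d i) (y := s.lcm d) (z := z) (hd i (by simp))
      (lcm_ne_zero' s d (fun j hj => hd j (by simp [hj]))) hz
    exact h1.trans (Nat.lcm_dvd (h i (by simp))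
      (ih (fun j hj => hd j (by simp [hj])) (fun j hj => h j (by simp [hj]))))

-- two modulus CRT
lemma crt2 (m n : ℕ) (u v : ℤ) (h : (Nat.gcd m n : ℤ) ∣ u - v) :
    ∃ c : ℤ, (m:ℤ) ∣ c - u ∧ (n:ℤ) ∣ c - v := by
  obtain ⟨t, ht⟩ := h
  refine ⟨u - (m:ℤ) * (Nat.gcdA m n) * t, ⟨-(Nat.gcdA m n * t), by ring⟩, ?_⟩
  have hb := Nat.gcd_eq_gcd_ab m n
  refine ⟨(Nat.gcdB m n) * t, ?_⟩
  have : u - v = ((m:ℤ) * Nat.gcdA m n + (n:ℤ) * Nat.gcdB m n) * t := by rw [← hb]; exact ht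
  linarith [this]

lemma crt {ι : Type*} [DecidableEq ι] (a : ι → ℤ) (d : ι → ℕ) (s : Finset ι)
    (hd : ∀ i ∈ s, d i ≠ 0)
    (h : ∀ i ∈ s, ∀ j ∈ s, (Nat.gcd (d i) (d j) : ℤ) ∣ a i - a j) :
    ∃ b : ℤ, ∀ i ∈ s, (d i : ℤ) ∣ b - a i := by
  induction s using Finset.induction_on with
  | empty => exact ⟨0, by simp⟩
  | @insert j s hj ih =>
    obtain ⟨b, hb⟩ := ih (fun i hi => hd i (by simp [hi]))
      (fun i hi k hk => h i (by simp [hi]) k (by simp [hk]))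
    have key : (Nat.gcd (s.lcm d) (d j) : ℤ) ∣ b - a j := by
      rw [Int.natCast_dvd]
      apply L3' d (d j) _ (hd j (by simp)) s (fun i hi => hd i (by simp [hi]))
      intro i hi
      rw [← Int.natCast_dvd]
      have h1 : (Nat.gcd (d i) (d j) : ℤ) ∣ b - a i :=
        dvd_trans (Int.natCast_dvd_natCast.mpr (Nat.gcd_dvd_left _ _)) (hb i hi)
      have h2 := h i (by simp [hi]) j (by simp)
      have := dvd_add h1 h2
      simpa using this
    obtain ⟨c, hc1, hc2⟩ := crt2 (d j) (s.lcm d) (a j) b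
      (by rw [Nat.gcd_comm]; have := dvd_neg.mpr key; simpa using this)
    refine ⟨c, ?_⟩
    intro i hi
    rcases Finset.mem_insert.mp hi with rfl | hi'
    · exact hc1
    · have h3 : (d i : ℤ) ∣ c - b :=
        dvd_trans (Int.natCast_dvd_natCast.mpr (Finset.dvd_lcm hi')) hc2
      have := dvd_add h3 (hb i hi')
      simpa using this

lemma fiber_card {G H : Type*} [Group G] [Group H] [Fintype G] [Fintype H]
    [DecidableEq G] [DecidableEq H]
    (f : G →* H) (hf : Function.Surjective f) (y : H) :
    Fintype.card H * (Finset.univ.filter (fun g => f g = y)).card = Fintype.card G := by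
  obtain ⟨g₀, hg₀⟩ := hf y
  have h1 : (Finset.univ.filter (fun g => f g = y)).card
      = (Finset.univ.filter (fun g => f g = 1)).card := by
    apply Finset.card_bij' (fun g _ => g * g₀⁻¹) (fun g _ => g * g₀)
    · intro g hg; simp only [Finset.mem_filter, Finset.mem_univ, true_and] at hg ⊢
      simp [hg, hg₀]
    · intro g hg; simp only [Finset.mem_filter, Finset.mem_univ, true_and] at hg ⊢
      simp [hg, hg₀]
    · intro g _; simp
    · intro g _; simp
  have h2 : (Finset.univ.filter (fun g => f g = 1)).card = Nat.card f.ker := by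
    rw [Nat.card_eq_fintype_card, Fintype.card_subtype]
    congr 1; ext g; simp [MonoidHom.mem_ker]
  have h3 : Nat.card G = Nat.card H * Nat.card f.ker := by
    have := Subgroup.card_eq_card_quotient_mul_card_subgroup f.ker
    rw [this]
    congr 1
    exact Nat.card_congr (QuotientGroup.quotientKerEquivOfSurjective f hf).toEquiv
  rw [h1, h2, ← Nat.card_eq_fintype_card, ← Nat.card_eq_fintype_card, h3]

lemma count_lemma (M L : ℕ) (hM0 : 0 < M) (hL : L ∣ M) (b : ℤ) (hb : Int.gcd b L = 1) :
    Nat.totient L *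
      ((Finset.Icc 1 M).filter (fun k => Nat.gcd k M = 1 ∧ (L:ℤ) ∣ (k:ℤ) - b)).card
      = Nat.totient M := by
  classical
  rcases eq_or_lt_of_le (show 1 ≤ M from hM0) with h1 | hM1
  · -- M = 1
    have hM : M = 1 := h1.symm
    subst hM
    have hL1 : L = 1 := Nat.dvd_one.mp hL
    subst hL1
    simp [Finset.Icc_self, Finset.filter_singleton]
  · -- 1 < M
    haveI : NeZero M := ⟨hM0.ne'⟩
    haveI : Fact (1 < M) := ⟨hM1⟩
    have hL0 : L ≠ 0 := fun h => by subst h; exact hM0.ne' (Nat.eq_zero_of_zero_dvd hL)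
    haveI : NeZero L := ⟨hL0⟩
    -- b is a unit mod L
    have hbu : IsUnit ((b : ZMod L)) := by
      obtain ⟨u, v, huv⟩ := Int.isCoprime_iff_gcd_eq_one.mpr hb
      apply IsUnit.of_mul_eq_one ((u : ZMod L))
      have : ((u * b + v * L : ℤ) : ZMod L) = ((1 : ℤ) : ZMod L) := by rw [huv]
      push_cast at this
      rw [ZMod.natCast_self] at this
      rw [mul_comm]
      simpa using this
    set bu : (ZMod L)ˣ := hbu.unit with hbu_def
    have hbu_coe : (bu : ZMod L) = (b : ZMod L) := IsUnit.unit_spec hbu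
    -- bijection between the filtered set and the fiber of unitsMap over bu
    have hcard : ((Finset.Icc 1 M).filter
        (fun k => Nat.gcd k M = 1 ∧ (L:ℤ) ∣ (k:ℤ) - b)).card
        = (Finset.univ.filter (fun u : (ZMod M)ˣ => ZMod.unitsMap hL u = bu)).card := by
      apply Finset.card_bij (fun k hk => ZMod.unitOfCoprime k
        (by exact (Finset.mem_filter.mp hk).2.1))
      · intro k hk
        obtain ⟨hk1, hk2, hk3⟩ := Finset.mem_filter.mp hk
        simp only [Finset.mem_filter, Finset.mem_univ, true_and]
        apply Units.ext
        rw [ZMod.unitsMap]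
        simp only [Units.coe_map, MonoidHom.coe_coe, ZMod.coe_unitOfCoprime, hbu_coe]
        rw [map_natCast]
        have : ((k : ℤ) : ZMod L) = (b : ZMod L) := by
          rw [ZMod.intCast_eq_intCast_iff]
          exact (Int.modEq_iff_dvd.mpr (by simpa using hk3)).symm
        simpa using this
      · intro k1 hk1 k2 hk2 heq
        have h1 := Finset.mem_filter.mp hk1
        have h2 := Finset.mem_filter.mp hk2
        have hcoe : ((k1 : ℕ) : ZMod M) = ((k2 : ℕ) : ZMod M) := by
          have := congrArg (Units.val) heq
          simpa [ZMod.coe_unitOfCoprime] using this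
        have hmod : k1 ≡ k2 [MOD M] := (ZMod.natCast_eq_natCast_iff _ _ _).mp hcoe
        have hk1M : k1 < M := by
          rcases lt_or_eq_of_le (Finset.mem_Icc.mp h1.1).2 with h | h
          · exact h
          · exfalso; rw [h] at h1; simp [Nat.gcd_self] at h1; omega
        have hk2M : k2 < M := by
          rcases lt_or_eq_of_le (Finset.mem_Icc.mp h2.1).2 with h | h
          · exact h
          · exfalso; rw [h] at h2; simp [Nat.gcd_self] at h2; omega
        exact hmod.eq_of_lt_of_lt hk1M hk2M
      · intro u hu
        simp only [Finset.mem_filter, Finset.mem_univ, true_and] at hu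
        set x : ZMod M := (u : ZMod M) with hx
        have hxne : x ≠ 0 := fun h => by
          have : IsUnit (0 : ZMod M) := h ▸ u.isUnit
          exact not_isUnit_zero this
        have hval1 : 1 ≤ x.val := Nat.one_le_iff_ne_zero.mpr
          (fun h => hxne (by rwa [← ZMod.val_eq_zero]))
        have hvalM : x.val < M := ZMod.val_lt x
        have hcop : Nat.gcd x.val M = 1 := ZMod.val_coe_unit_coprime u
        have hdvd : (L:ℤ) ∣ (x.val : ℤ) - b := by
          have hmap : (ZMod.castHom hL (ZMod L)) x = (b : ZMod L) := by
            have := congrArg (Units.val) hu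
            rw [ZMod.unitsMap] at this
            simpa [Units.coe_map, hbu_coe] using this
          have hvx : ((x.val : ℕ) : ZMod M) = x := ZMod.natCast_rightInverse x
          have : ((x.val : ℕ) : ZMod L) = (b : ZMod L) := by
            rw [← map_natCast (ZMod.castHom hL (ZMod L)), hvx, hmap]
          have h5 : ((x.val : ℤ) : ZMod L) = (b : ZMod L) := by
            push_cast at this ⊢; exact this
          have := (ZMod.intCast_eq_intCast_iff _ _ _).mp h5
          exact Int.ModEq.dvd this.symm
        refine ⟨x.val, Finset.mem_filter.mpr ⟨Finset.mem_Icc.mpr ⟨hval1, hvalM.le⟩,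
          hcop, hdvd⟩, ?_⟩
        apply Units.ext
        simp [ZMod.coe_unitOfCoprime, hx, ZMod.natCast_val, ZMod.cast_id]
    rw [hcard]
    have := fiber_card (ZMod.unitsMap hL) (ZMod.unitsMap_surjective hL) bu
    rw [ZMod.card_units_eq_totient, ZMod.card_units_eq_totient] at this
    exact this

lemma gcd_shift (x y : ℤ) (n : ℕ) (h : (n:ℤ) ∣ x - y) : Int.gcd x n = Int.gcd y n := by
  have key : ∀ u v : ℤ, (n:ℤ) ∣ u - v → (Int.gcd u n : ℤ) ∣ v := by
    intro u v huv
    have h1 : (Int.gcd u n : ℤ) ∣ u := Int.gcd_dvd_left _ _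
    have h2 : (Int.gcd u n : ℤ) ∣ u - v := dvd_trans (Int.gcd_dvd_right _ _) huv
    have := dvd_sub h1 h2
    simpa using this
  apply Nat.dvd_antisymm
  · rw [← Int.natCast_dvd_natCast]
    push_cast
    exact Int.dvd_coe_gcd (key x y h) (Int.gcd_dvd_right _ _)
  · rw [← Int.natCast_dvd_natCast]
    push_cast
    exact Int.dvd_coe_gcd (key y x (by simpa using h.neg_right)) (Int.gcd_dvd_right _ _)

/-- divisibility by the finset lcm of nats, for integers -/
lemma lcm_dvd_int {ι : Type*} (s : Finset ι) (d : ι → ℕ) (z : ℤ)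
    (h : ∀ i ∈ s, (d i : ℤ) ∣ z) : ((s.lcm d : ℕ) : ℤ) ∣ z := by
  rw [Int.natCast_dvd]
  apply Finset.lcm_dvd
  intro i hi
  rw [← Int.natCast_dvd]
  exact h i hi

/-- `etaA a d = 1` if `gcd(dᵢ, aᵢ) = 1` for all `i` and `gcd(dᵢ, dⱼ) ∣ aᵢ - aⱼ`
for all `i, j`, and `0` otherwise. -/
def etaA {r : ℕ} (a : Fin r → ℤ) (d : Fin r → ℕ) : ℕ :=
  if (∀ i, Int.gcd (a i) (d i) = 1) ∧
      (∀ i j, ((Nat.gcd (d i) (d j) : ℤ)) ∣ (a i - a j)) then 1 else 0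

lemma per_d (r : ℕ) (a : Fin r → ℤ) (M : ℕ) (hM0 : 0 < M)
    (d : Fin r → ℕ) (hdM : ∀ i, d i ∣ M) (hd0 : ∀ i, d i ≠ 0) :
    Nat.totient (Finset.univ.lcm d) *
      (((Finset.Icc 1 M).filter (fun k => Nat.gcd k M = 1)).filter
        (fun k : ℕ => ∀ i, (d i : ℤ) ∣ (k:ℤ) - a i)).card
    = Nat.totient M * etaA a d := by
  classical
  rw [Finset.filter_filter]
  by_cases hη : (∀ i, Int.gcd (a i) (d i) = 1) ∧
      (∀ i j, ((Nat.gcd (d i) (d j) : ℤ)) ∣ (a i - a j))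
  · obtain ⟨h1, h2⟩ := hη
    rw [etaA, if_pos ⟨h1, h2⟩, mul_one]
    obtain ⟨b, hb⟩ := crt a d Finset.univ (fun i _ => hd0 i) (fun i _ j _ => h2 i j)
    set L := Finset.univ.lcm d with hL
    have hLM : L ∣ M := Finset.lcm_dvd (fun i _ => hdM i)
    have hbL : Int.gcd b L = 1 := by
      have hbd : ∀ i, Nat.Coprime b.natAbs (d i) := by
        intro i
        have h3 : Int.gcd b (d i) = 1 := by
          rw [gcd_shift b (a i) (d i) (hb i (mem_univ i))]
          exact h1 i
        simpa [Int.gcd] using h3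
      have hprod : Nat.Coprime b.natAbs (∏ i, d i) :=
        Nat.Coprime.prod_right (fun i _ => hbd i)
      have hLp : L ∣ ∏ i, d i :=
        Finset.lcm_dvd (fun i _ => Finset.dvd_prod_of_mem d (mem_univ i))
      have := Nat.Coprime.coprime_dvd_right hLp hprod
      simpa [Int.gcd] using this
    have hfil : ∀ k : ℕ, ((∀ i, (d i:ℤ) ∣ (k:ℤ) - a i) ↔ (L:ℤ) ∣ (k:ℤ) - b) := by
      intro k
      constructor
      · intro h
        apply lcm_dvd_int
        intro i _
        have := dvd_sub (h i) (hb i (mem_univ i))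
        simpa using this
      · intro h i
        have hdL : (d i : ℤ) ∣ (L:ℤ) :=
          Int.natCast_dvd_natCast.mpr (Finset.dvd_lcm (mem_univ i))
        have := dvd_add (hdL.trans h) (hb i (mem_univ i))
        simpa using this
    rw [show ((Finset.Icc 1 M).filter
        (fun k : ℕ => Nat.gcd k M = 1 ∧ ∀ i, (d i : ℤ) ∣ (k:ℤ) - a i)) =
        ((Finset.Icc 1 M).filter (fun k => Nat.gcd k M = 1 ∧ (L:ℤ) ∣ (k:ℤ) - b)) from
      Finset.filter_congr (fun k _ => and_congr_right (fun _ => hfil k))]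
    exact count_lemma M L hM0 hLM b hbL
  · rw [etaA, if_neg hη, mul_zero]
    have : ((Finset.Icc 1 M).filter
        (fun k : ℕ => Nat.gcd k M = 1 ∧ ∀ i, (d i : ℤ) ∣ (k:ℤ) - a i)) = ∅ := by
      rw [Finset.filter_eq_empty_iff]
      rintro k _ ⟨hk1, hk2⟩
      apply hη
      constructor
      · intro i
        rw [← gcd_shift (k:ℤ) (a i) (d i) (hk2 i)]
        have h4 : Nat.Coprime k (d i) := Nat.Coprime.coprime_dvd_right (hdM i) hk1
        simpa [Int.gcd] using h4
      · intro i j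
        have hga : (Nat.gcd (d i) (d j) : ℤ) ∣ (k:ℤ) - a i :=
          dvd_trans (Int.natCast_dvd_natCast.mpr (Nat.gcd_dvd_left _ _)) (hk2 i)
        have hgb : (Nat.gcd (d i) (d j) : ℤ) ∣ (k:ℤ) - a j :=
          dvd_trans (Int.natCast_dvd_natCast.mpr (Nat.gcd_dvd_right _ _)) (hk2 j)
        have := dvd_sub hgb hga
        simpa using this
    rw [this]
    simp

theorem stmt11 (r : ℕ) (hr : 1 ≤ r) (a : Fin r → ℤ)
    (m : Fin r → ℕ) (hm : ∀ i, 0 < m i) (M : ℕ) (hM0 : 0 < M)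
    (hM : (Finset.univ.lcm m) ∣ M) :
    (1 / (Nat.totient M : ℚ)) *
        ∑ k ∈ (Finset.Icc 1 M).filter (fun k => Nat.gcd k M = 1),
          ((∏ i, Int.gcd ((k : ℤ) - a i) (m i) : ℕ) : ℚ) =
      ∑ d ∈ Fintype.piFinset (fun i => (m i).divisors),
        (∏ i, (Nat.totient (d i) : ℚ)) / (Nat.totient (Finset.univ.lcm d) : ℚ) *
          (etaA a d : ℚ) := by
  classical
  have hmM : ∀ i, m i ∣ M := fun i => (Finset.dvd_lcm (mem_univ i)).trans hM
  have key : ∀ k : ℕ, ((∏ i, Int.gcd ((k : ℤ) - a i) (m i) : ℕ) : ℚ)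
      = ∑ d ∈ Fintype.piFinset (fun i => (m i).divisors),
          if (∀ i, ((d i : ℤ) ∣ (k:ℤ) - a i)) then (∏ i, (Nat.totient (d i) : ℚ))
          else 0 := by
    intro k
    have h1 : (∏ i, Int.gcd ((k : ℤ) - a i) (m i))
        = ∑ d ∈ Fintype.piFinset (fun i => (m i).divisors),
            if (∀ i, ((d i : ℤ) ∣ (k:ℤ) - a i)) then (∏ i, Nat.totient (d i)) else 0 := by
      calc (∏ i, Int.gcd ((k : ℤ) - a i) (m i))
          = ∏ i, ∑ e ∈ (m i).divisors,
              if (e:ℤ) ∣ ((k:ℤ) - a i) then Nat.totient e else 0 := by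
            apply Finset.prod_congr rfl
            intro i _
            exact L1 _ _ (hm i).ne'
        _ = ∑ d ∈ Fintype.piFinset (fun i => (m i).divisors),
              ∏ i, if ((d i : ℤ) ∣ (k:ℤ) - a i) then Nat.totient (d i) else 0 :=
            Finset.prod_univ_sum _ _
        _ = _ := by
            apply Finset.sum_congr rfl
            intro d _
            rw [Fintype.prod_ite_zero (p := fun i => ((d i : ℤ) ∣ (k:ℤ) - a i)) (f := fun i => Nat.totient (d i))]; congr 1
    rw [h1]
    push_cast
    rfl
  rw [Finset.sum_congr rfl (fun k _ => key k), Finset.sum_comm, Finset.mul_sum]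
  apply Finset.sum_congr rfl
  intro d hd
  have hdm : ∀ i, d i ∣ m i ∧ d i ≠ 0 := by
    intro i
    have := Fintype.mem_piFinset.mp hd i
    exact ⟨(Nat.mem_divisors.mp this).1, Nat.pos_of_mem_divisors this |>.ne'⟩
  rw [← Finset.sum_filter, Finset.sum_const, nsmul_eq_mul]
  have hq := per_d r a M hM0 d (fun i => (hdm i).1.trans (hmM i)) (fun i => (hdm i).2)
  have hq' : (Nat.totient (Finset.univ.lcm d) : ℚ) *
      (((Finset.Icc 1 M).filter (fun k => Nat.gcd k M = 1)).filter
        (fun k : ℕ => ∀ i, (d i : ℤ) ∣ (k:ℤ) - a i)).card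
      = (Nat.totient M : ℚ) * (etaA a d : ℚ) := by exact_mod_cast hq
  have hφM : (Nat.totient M : ℚ) ≠ 0 :=
    Nat.cast_ne_zero.mpr (Nat.totient_pos.mpr hM0).ne'
  have hφL : (Nat.totient (Finset.univ.lcm d) : ℚ) ≠ 0 := by
    apply Nat.cast_ne_zero.mpr
    exact (Nat.totient_pos.mpr (Nat.pos_of_ne_zero
      (lcm_ne_zero' Finset.univ d (fun i _ => (hdm i).2)))).ne'
  field_simp
  linear_combination (∏ i, (Nat.totient (d i) : ℚ)) * hq'
end

section
/- Let G = (g₁, g₂) be a pair of polynomials with integer coefficients, let m₁, m₂ ∈ ℕ, m := lcm[m₁, m₂], and M ∈ ℕ with m ∣ M. Then (1/φ(M)) · ∑_{1 ≤ k ≤ M, gcd(k,M)=1} gcd(g₁(k), m₁) · gcd(g₂(k), m₂) = ∑_{d₁ ∣ m₁, d₂ ∣ m₂} φ(gcd(d₁, d₂)) · η_G(d₁, d₂). -/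
open Finset

/-- `eta2 g₁ g₂ d₁ d₂` is the number of residues `x` modulo `lcm[d₁, d₂]` satisfying
`g₁(x) ≡ 0 (mod d₁)`, `g₂(x) ≡ 0 (mod d₂)`, `gcd(x, d₁) = 1` and `gcd(x, d₂) = 1`. -/
def eta2 (g₁ g₂ : Polynomial ℤ) (d₁ d₂ : ℕ) : ℕ :=
  ((Finset.range (Nat.lcm d₁ d₂)).filter
    (fun x : ℕ => (d₁ : ℤ) ∣ g₁.eval (x : ℤ) ∧ (d₂ : ℤ) ∣ g₂.eval (x : ℤ) ∧
      Nat.gcd x d₁ = 1 ∧ Nat.gcd x d₂ = 1)).card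



lemma gcd_expand (a : ℤ) {m : ℕ} (hm : 0 < m) :
    Int.gcd a m = ∑ d ∈ m.divisors.filter (fun d : ℕ => (d:ℤ) ∣ a), Nat.totient d := by
  have hg : Int.gcd a m = Nat.gcd a.natAbs m := by
    rw [Int.gcd]; simp
  have key : (Int.gcd a m).divisors = m.divisors.filter (fun d : ℕ => (d:ℤ) ∣ a) := by
    ext d
    simp only [Nat.mem_divisors, Finset.mem_filter, hg, Nat.dvd_gcd_iff, Int.natCast_dvd]
    constructor
    · intro ⟨⟨h1, h2⟩, _⟩
      exact ⟨⟨h2, hm.ne'⟩, h1⟩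
    · intro ⟨⟨h2, _⟩, h1⟩
      refine ⟨⟨h1, h2⟩, ?_⟩
      simp [Nat.gcd_eq_zero_iff, hm.ne']
    
  conv_lhs => rw [← Nat.sum_totient (Int.gcd a m), key]




lemma fiber_card_s12 {G H : Type*} [Group G] [Group H] [Fintype G]
    (f : G →* H) (hf : Function.Surjective f) (h : H) :
    Nat.card {u : G // f u = h} * Nat.card H = Nat.card G := by
  obtain ⟨w, hw⟩ := hf h
  have e : {u : G // f u = h} ≃ f.ker := {
    toFun := fun u => ⟨u.1 * w⁻¹, by simp [MonoidHom.mem_ker, u.2, hw]⟩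
    invFun := fun v => ⟨v.1 * w, by
      have := v.2
      simp only [MonoidHom.mem_ker] at this
      simp [this, hw]⟩
    left_inv := fun u => by simp
    right_inv := fun v => by simp }
  rw [Nat.card_congr e, Subgroup.card_eq_card_quotient_mul_card_subgroup f.ker,
    Nat.card_congr (QuotientGroup.quotientKerEquivOfSurjective f hf).toEquiv]
  ring

lemma range_fiber_count {M l x : ℕ} (hM : 0 < M) (hl : l ∣ M) (hx : x < l)
    (hxl : Nat.Coprime x l) :
    ((range M).filter (fun k => Nat.gcd k M = 1 ∧ k % l = x)).card * Nat.totient l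
      = Nat.totient M := by
  haveI : NeZero M := ⟨hM.ne'⟩
  haveI : NeZero l := ⟨(Nat.pos_of_dvd_of_pos hl hM).ne'⟩
  set f := ZMod.unitsMap hl with hf
  set u₀ := ZMod.unitOfCoprime x hxl with hu₀
  have key : ∀ (k : ℕ) (hk : Nat.Coprime k M),
      (f (ZMod.unitOfCoprime k hk) = u₀ ↔ k % l = x) := by
    intro k hk
    rw [Units.ext_iff]
    have : (f (ZMod.unitOfCoprime k hk) : ZMod l) = (k : ZMod l) := by
      simp [hf, ZMod.unitsMap, ZMod.coe_unitOfCoprime]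
    rw [this, hu₀, ZMod.coe_unitOfCoprime, ZMod.natCast_eq_natCast_iff',
      Nat.mod_eq_of_lt hx]
  have hcard : ((range M).filter (fun k => Nat.gcd k M = 1 ∧ k % l = x)).card
      = Fintype.card {u : (ZMod M)ˣ // f u = u₀} := by
    rw [Fintype.card_subtype]
    apply Finset.card_bij
      (i := fun k hk => ZMod.unitOfCoprime k (by
        simp only [mem_filter] at hk; exact hk.2.1))
    · intro k hk
      simp only [mem_filter, mem_univ, true_and] at hk ⊢
      exact (key k hk.2.1).mpr hk.2.2
    · intro k hk k' hk' heq
      simp only [mem_filter, mem_range] at hk hk'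
      have : ((k : ZMod M)) = (k' : ZMod M) := by
        have := congrArg (fun u : (ZMod M)ˣ => (u : ZMod M)) heq
        simpa [ZMod.coe_unitOfCoprime] using this
      rwa [ZMod.natCast_eq_natCast_iff', Nat.mod_eq_of_lt hk.1,
        Nat.mod_eq_of_lt hk'.1] at this
    · intro u hu
      simp only [mem_filter, mem_univ, true_and] at hu
      refine ⟨(u : ZMod M).val, ?_, ?_⟩
      · simp only [mem_filter, mem_range]
        refine ⟨ZMod.val_lt _, ZMod.val_coe_unit_coprime u, ?_⟩
        rw [← key _ (ZMod.val_coe_unit_coprime u)]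
        convert hu using 2
        exact Units.ext (by simp [ZMod.natCast_val, ZMod.cast_id])
      · exact Units.ext (by simp [ZMod.coe_unitOfCoprime, ZMod.natCast_val, ZMod.cast_id])
  rw [hcard]
  have hsurj : Function.Surjective f := ZMod.unitsMap_surjective hl
  have := fiber_card_s12 f hsurj u₀
  simp only [Nat.card_eq_fintype_card, ZMod.card_units_eq_totient] at this
  exact this


lemma icc_to_range {M : ℕ} (hM : 0 < M) (q : ℕ → Prop) [DecidablePred q]
    (hq : ∀ k j, k % M = j % M → (q k ↔ q j)) :
    ((Icc 1 M).filter (fun k => Nat.gcd k M = 1 ∧ q k)).card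
      = ((range M).filter (fun k => Nat.gcd k M = 1 ∧ q k)).card := by
  have hgcd : ∀ k, Nat.gcd (k % M) M = Nat.gcd k M := by
    intro k; rw [← Nat.gcd_rec]; exact Nat.gcd_comm _ _
  apply Finset.card_nbij' (fun k => k % M) (fun j => if j = 0 then M else j)
  · intro k hk
    simp only [mem_coe, mem_filter, mem_Icc, mem_range] at hk ⊢
    obtain ⟨⟨hk1, hk2⟩, hg, hqk⟩ := hk
    exact ⟨Nat.mod_lt _ hM, by rw [hgcd]; exact hg,
      (hq _ _ (Nat.mod_mod_of_dvd k dvd_rfl)).mpr hqk⟩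
  · intro j hj
    simp only [mem_coe, mem_filter, mem_Icc, mem_range] at hj ⊢
    obtain ⟨hjM, hg, hqj⟩ := hj
    by_cases h0 : j = 0
    · subst h0
      have : M = 1 := by simpa using hg
      subst this
      simp only [if_pos rfl]
      exact ⟨⟨le_refl 1, le_refl 1⟩, by simp, (hq 1 0 (by simp)).mpr hqj⟩
    · rw [if_neg h0]
      exact ⟨⟨Nat.one_le_iff_ne_zero.mpr h0, le_of_lt hjM⟩, hg, hqj⟩
  · intro k hk
    simp only [mem_coe, mem_filter, mem_Icc] at hk
    obtain ⟨⟨hk1, hk2⟩, _⟩ := hk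
    by_cases h : k = M
    · subst h; simp
    · have : k < M := lt_of_le_of_ne hk2 h
      beta_reduce
      rw [Nat.mod_eq_of_lt this]
      simp [Nat.one_le_iff_ne_zero.mp hk1]
  · intro j hj
    simp only [mem_coe, mem_filter, mem_range] at hj
    by_cases h0 : j = 0
    · subst h0; simp
    · beta_reduce
      rw [if_neg h0]
      exact Nat.mod_eq_of_lt hj.1

section
variable (g₁ g₂ : Polynomial ℤ)

-- divisibility transfer mod l
lemma dvd_eval_mod (g : Polynomial ℤ) {d l : ℕ} (hd : d ∣ l) (k : ℕ) :
    (d:ℤ) ∣ g.eval (k:ℤ) ↔ (d:ℤ) ∣ g.eval ((k % l : ℕ):ℤ) := by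
  have h1 : (d:ℤ) ∣ (k:ℤ) - ((k % l : ℕ):ℤ) := by
    have h2 : l ∣ k - k % l := Nat.dvd_sub_mod k
    have h3 : ((k - k % l : ℕ) : ℤ) = (k:ℤ) - ((k % l : ℕ):ℤ) := by
      have := Nat.mod_le k l
      omega
    rw [← h3]
    exact_mod_cast Int.natCast_dvd_natCast.mpr (hd.trans h2)
  have h4 : (d:ℤ) ∣ g.eval (k:ℤ) - g.eval ((k % l : ℕ):ℤ) :=
    h1.trans (Polynomial.sub_dvd_eval_sub _ _ g)
  constructor
  · intro h; exact (dvd_sub_right h).mp h4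
  · intro h
    have := dvd_add h4 h
    simpa using this
end

lemma totient_mul_eq (d₁ d₂ : ℕ) (h₁ : 0 < d₁) (h₂ : 0 < d₂) :
    Nat.totient d₁ * Nat.totient d₂
      = Nat.totient (Nat.gcd d₁ d₂) * Nat.totient (Nat.lcm d₁ d₂) := by
  have hg : 0 < Nat.gcd d₁ d₂ := Nat.gcd_pos_of_pos_left _ h₁
  have h1 := Nat.totient_gcd_mul_totient_mul d₁ d₂
  have h2 := Nat.totient_gcd_mul_totient_mul (Nat.gcd d₁ d₂) (Nat.lcm d₁ d₂)
  rw [Nat.gcd_eq_left ((Nat.gcd_dvd_left d₁ d₂).trans (Nat.dvd_lcm_left d₁ d₂)),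
    Nat.gcd_mul_lcm] at h2
  -- h1 : φ g * φ (d₁ * d₂) = φ d₁ * φ d₂ * g
  -- h2 : φ g * φ (d₁ * d₂) = φ g * φ l * g
  exact Nat.eq_of_mul_eq_mul_right hg (h1.symm.trans h2)

lemma key_count_s12 (g₁ g₂ : Polynomial ℤ) {d₁ d₂ M : ℕ} (hd₁ : 0 < d₁) (hd₂ : 0 < d₂)
    (hM : 0 < M) (hdvd : Nat.lcm d₁ d₂ ∣ M) :
    Nat.totient d₁ * Nat.totient d₂ *
      ((Icc 1 M).filter (fun k => Nat.gcd k M = 1 ∧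
        (d₁:ℤ) ∣ g₁.eval (k:ℤ) ∧ (d₂:ℤ) ∣ g₂.eval (k:ℤ))).card
    = Nat.totient (Nat.gcd d₁ d₂) * eta2 g₁ g₂ d₁ d₂ * Nat.totient M := by
  set l := Nat.lcm d₁ d₂ with hldef
  have hl : 0 < l := Nat.pos_of_dvd_of_pos hdvd hM
  have hd₁l : d₁ ∣ l := Nat.dvd_lcm_left _ _
  have hd₂l : d₂ ∣ l := Nat.dvd_lcm_right _ _
  have hgcdmod : ∀ a b : ℕ, Nat.gcd (a % b) b = Nat.gcd a b := by
    intro a b; rw [← Nat.gcd_rec]; exact Nat.gcd_comm _ _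
  rw [totient_mul_eq d₁ d₂ hd₁ hd₂, mul_assoc, mul_assoc]
  congr 1
  -- Goal: φ l * N = η * φ M
  -- fiberwise decomposition
  have hmap : ∀ k ∈ (Icc 1 M).filter (fun k => Nat.gcd k M = 1 ∧
        (d₁:ℤ) ∣ g₁.eval (k:ℤ) ∧ (d₂:ℤ) ∣ g₂.eval (k:ℤ)),
      k % l ∈ (Finset.range l).filter
        (fun x : ℕ => (d₁ : ℤ) ∣ g₁.eval (x : ℤ) ∧ (d₂ : ℤ) ∣ g₂.eval (x : ℤ) ∧
          Nat.gcd x d₁ = 1 ∧ Nat.gcd x d₂ = 1) := by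
    intro k hk
    simp only [mem_filter, mem_Icc, mem_range] at hk ⊢
    obtain ⟨_, hg, hdv₁, hdv₂⟩ := hk
    have hco : ∀ d : ℕ, d ∣ l → Nat.gcd (k % l) d = 1 := by
      intro d hd
      rw [← hgcdmod (k % l) d, Nat.mod_mod_of_dvd k hd, hgcdmod]
      exact Nat.Coprime.coprime_dvd_right (hd.trans hdvd) hg
    exact ⟨Nat.mod_lt _ hl, (dvd_eval_mod g₁ hd₁l k).mp hdv₁,
      (dvd_eval_mod g₂ hd₂l k).mp hdv₂, hco d₁ hd₁l, hco d₂ hd₂l⟩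
  have step1 := Finset.card_eq_sum_card_fiberwise hmap
  rw [step1, Finset.mul_sum]
  have hterm : ∀ x ∈ (Finset.range l).filter
        (fun x : ℕ => (d₁ : ℤ) ∣ g₁.eval (x : ℤ) ∧ (d₂ : ℤ) ∣ g₂.eval (x : ℤ) ∧
          Nat.gcd x d₁ = 1 ∧ Nat.gcd x d₂ = 1),
      Nat.totient l * (((Icc 1 M).filter (fun k => Nat.gcd k M = 1 ∧
        (d₁:ℤ) ∣ g₁.eval (k:ℤ) ∧ (d₂:ℤ) ∣ g₂.eval (k:ℤ))).filter
          (fun k => k % l = x)).card = Nat.totient M := by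
    intro x hx
    simp only [mem_filter, mem_range] at hx
    obtain ⟨hxl, hx1, hx2, hxg1, hxg2⟩ := hx
    have hsets : ((Icc 1 M).filter (fun k => Nat.gcd k M = 1 ∧
        (d₁:ℤ) ∣ g₁.eval (k:ℤ) ∧ (d₂:ℤ) ∣ g₂.eval (k:ℤ))).filter (fun k => k % l = x)
        = (Icc 1 M).filter (fun k => Nat.gcd k M = 1 ∧ k % l = x) := by
      rw [Finset.filter_filter]
      apply Finset.filter_congr
      intro k _
      constructor
      · rintro ⟨⟨hg, _, _⟩, hm⟩; exact ⟨hg, hm⟩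
      · rintro ⟨hg, hm⟩
        refine ⟨⟨hg, ?_, ?_⟩, hm⟩
        · rw [dvd_eval_mod g₁ hd₁l k, hm]; exact hx1
        · rw [dvd_eval_mod g₂ hd₂l k, hm]; exact hx2
    rw [hsets]
    have hco : Nat.Coprime x l :=
      Nat.Coprime.coprime_dvd_right (Nat.lcm_dvd_mul d₁ d₂)
        (Nat.Coprime.mul_right hxg1 hxg2)
    have := range_fiber_count (x := x) hM hdvd hxl hco
    rw [icc_to_range hM (fun k => k % l = x)
      (fun k j h => by
        rw [← Nat.mod_mod_of_dvd k hdvd, ← Nat.mod_mod_of_dvd j hdvd, h])]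
    rw [mul_comm]
    exact this
  rw [Finset.sum_congr rfl hterm, Finset.sum_const, smul_eq_mul, eta2]

lemma main_nat (g₁ g₂ : Polynomial ℤ) (m₁ m₂ : ℕ) (h₁ : 0 < m₁) (h₂ : 0 < m₂)
    (M : ℕ) (hM0 : 0 < M) (hM : Nat.lcm m₁ m₂ ∣ M) :
    ∑ k ∈ (Finset.Icc 1 M).filter (fun k => Nat.gcd k M = 1),
        Int.gcd (g₁.eval (k : ℤ)) m₁ * Int.gcd (g₂.eval (k : ℤ)) m₂
      = ∑ d₁ ∈ m₁.divisors, ∑ d₂ ∈ m₂.divisors,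
          Nat.totient (Nat.gcd d₁ d₂) * eta2 g₁ g₂ d₁ d₂ * Nat.totient M := by
  set S := (Finset.Icc 1 M).filter (fun k => Nat.gcd k M = 1) with hS
  calc
    ∑ k ∈ S, Int.gcd (g₁.eval (k : ℤ)) m₁ * Int.gcd (g₂.eval (k : ℤ)) m₂
      = ∑ k ∈ S, ∑ d₁ ∈ m₁.divisors, ∑ d₂ ∈ m₂.divisors,
          (if (d₁:ℤ) ∣ g₁.eval (k:ℤ) then Nat.totient d₁ else 0) *
          (if (d₂:ℤ) ∣ g₂.eval (k:ℤ) then Nat.totient d₂ else 0) := by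
        refine Finset.sum_congr rfl fun k _ => ?_
        rw [gcd_expand (g₁.eval (k:ℤ)) h₁, gcd_expand (g₂.eval (k:ℤ)) h₂,
          Finset.sum_filter, Finset.sum_filter, Finset.sum_mul_sum]
    _ = ∑ d₁ ∈ m₁.divisors, ∑ d₂ ∈ m₂.divisors, ∑ k ∈ S,
          (if (d₁:ℤ) ∣ g₁.eval (k:ℤ) then Nat.totient d₁ else 0) *
          (if (d₂:ℤ) ∣ g₂.eval (k:ℤ) then Nat.totient d₂ else 0) := by
        rw [Finset.sum_comm]
        exact Finset.sum_congr rfl fun d₁ _ => Finset.sum_comm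
    _ = ∑ d₁ ∈ m₁.divisors, ∑ d₂ ∈ m₂.divisors,
          Nat.totient (Nat.gcd d₁ d₂) * eta2 g₁ g₂ d₁ d₂ * Nat.totient M := by
        refine Finset.sum_congr rfl fun d₁ hd₁ => Finset.sum_congr rfl fun d₂ hd₂ => ?_
        have hd₁' := Nat.mem_divisors.mp hd₁
        have hd₂' := Nat.mem_divisors.mp hd₂
        have hd₁pos : 0 < d₁ := Nat.pos_of_dvd_of_pos hd₁'.1 h₁
        have hd₂pos : 0 < d₂ := Nat.pos_of_dvd_of_pos hd₂'.1 h₂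
        have hdvd : Nat.lcm d₁ d₂ ∣ M :=
          (Nat.lcm_dvd (hd₁'.1.trans (Nat.dvd_lcm_left m₁ m₂))
            (hd₂'.1.trans (Nat.dvd_lcm_right m₁ m₂))).trans hM
        have hite : ∀ k : ℕ,
            (if (d₁:ℤ) ∣ g₁.eval (k:ℤ) then Nat.totient d₁ else 0) *
            (if (d₂:ℤ) ∣ g₂.eval (k:ℤ) then Nat.totient d₂ else 0)
            = if ((d₁:ℤ) ∣ g₁.eval (k:ℤ) ∧ (d₂:ℤ) ∣ g₂.eval (k:ℤ))
                then Nat.totient d₁ * Nat.totient d₂ else 0 := by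
          intro k
          by_cases hh1 : (d₁:ℤ) ∣ g₁.eval (k:ℤ) <;>
            by_cases hh2 : (d₂:ℤ) ∣ g₂.eval (k:ℤ) <;> simp [hh1, hh2]
        rw [Finset.sum_congr rfl (fun k _ => hite k), ← Finset.sum_filter,
          Finset.sum_const, smul_eq_mul, hS, Finset.filter_filter, mul_comm]
        exact key_count_s12 g₁ g₂ hd₁pos hd₂pos hM0 hdvd

theorem stmt12 (g₁ g₂ : Polynomial ℤ) (m₁ m₂ : ℕ) (h₁ : 0 < m₁) (h₂ : 0 < m₂)
    (M : ℕ) (hM0 : 0 < M) (hM : Nat.lcm m₁ m₂ ∣ M) :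
    (1 / (Nat.totient M : ℚ)) *
        ∑ k ∈ (Finset.Icc 1 M).filter (fun k => Nat.gcd k M = 1),
          ((Int.gcd (g₁.eval (k : ℤ)) m₁ * Int.gcd (g₂.eval (k : ℤ)) m₂ : ℕ) : ℚ) =
      ∑ d₁ ∈ m₁.divisors, ∑ d₂ ∈ m₂.divisors,
        (Nat.totient (Nat.gcd d₁ d₂) : ℚ) * (eta2 g₁ g₂ d₁ d₂ : ℚ) := by
  have hphi : (Nat.totient M : ℚ) ≠ 0 :=
    Nat.cast_ne_zero.mpr (Nat.totient_pos.mpr hM0).ne'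
  have hnat := main_nat g₁ g₂ m₁ m₂ h₁ h₂ M hM0 hM
  have hcast : (∑ k ∈ (Finset.Icc 1 M).filter (fun k => Nat.gcd k M = 1),
      ((Int.gcd (g₁.eval (k : ℤ)) m₁ * Int.gcd (g₂.eval (k : ℤ)) m₂ : ℕ) : ℚ))
      = (Nat.totient M : ℚ) * ∑ d₁ ∈ m₁.divisors, ∑ d₂ ∈ m₂.divisors,
          (Nat.totient (Nat.gcd d₁ d₂) : ℚ) * (eta2 g₁ g₂ d₁ d₂ : ℚ) := by
    rw [← Nat.cast_sum]
    rw [hnat]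
    push_cast
    rw [Finset.mul_sum]
    refine Finset.sum_congr rfl fun d₁ _ => ?_
    rw [Finset.mul_sum]
    refine Finset.sum_congr rfl fun d₂ _ => ?_
    ring
  rw [hcast, ← mul_assoc, one_div_mul_cancel hphi, one_mul]
end
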